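/- arXiv:1405.5900 — 6 statements merged into one kernel-verified Lean document; each statement's English description precedes it below -/
import Mathlib

section
/- If the vectors (XXᵀ)^j (XXᵀY), j = 0, 1, …, n−1, span ℝⁿ, then there exists β ∈ K^n(XᵀX, XᵀY) with Xβ = Y; in particular the minimum of ‖Y − Xβ‖² over β ∈ K^n(XᵀX, XᵀY) is 0. -/
open Matrix Polynomial

lemma pow_mul_comm_aux {n p : ℕ} (X : Matrix (Fin n) (Fin p) ℝ) (j : ℕ) :
    (X * Xᵀ) ^ j * X = X * (Xᵀ * X) ^ j := by
  induction j with
  | zero => simp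
  | succ k ih =>
    rw [pow_succ, pow_succ, Matrix.mul_assoc, Matrix.mul_assoc X Xᵀ X,
        ← Matrix.mul_assoc, ih, Matrix.mul_assoc]

/-- If the vectors (XXᵀ)^j (XXᵀY), j = 0, …, n−1, span ℝⁿ, then there is
β ∈ K^n(XᵀX, XᵀY) with Xβ = Y; in particular the minimum of ‖Y − Xβ‖² over
β ∈ K^n(XᵀX, XᵀY) is 0. -/
theorem stmt1 {n p : ℕ} (X : Matrix (Fin n) (Fin p) ℝ) (Y : Fin n → ℝ)
    (hspan : Submodule.span ℝ
        {v : Fin n → ℝ | ∃ j < n, v = ((X * Xᵀ) ^ j) *ᵥ ((X * Xᵀ) *ᵥ Y)} = ⊤) :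
    (∃ β ∈ Submodule.span ℝ
        {v : Fin p → ℝ | ∃ j < n, v = ((Xᵀ * X) ^ j) *ᵥ (Xᵀ *ᵥ Y)}, X *ᵥ β = Y) ∧
    IsLeast {r : ℝ | ∃ β ∈ Submodule.span ℝ
        {v : Fin p → ℝ | ∃ j < n, v = ((Xᵀ * X) ^ j) *ᵥ (Xᵀ *ᵥ Y)},
        r = ∑ i, (Y i - (X *ᵥ β) i) ^ 2} 0 := by
  set T : Set (Fin p → ℝ) :=
    {v : Fin p → ℝ | ∃ j < n, v = ((Xᵀ * X) ^ j) *ᵥ (Xᵀ *ᵥ Y)} with hT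
  have key : ∀ j : ℕ, ((X * Xᵀ) ^ j) *ᵥ ((X * Xᵀ) *ᵥ Y)
      = X *ᵥ (((Xᵀ * X) ^ j) *ᵥ (Xᵀ *ᵥ Y)) := by
    intro j
    simp only [mulVec_mulVec]
    rw [← Matrix.mul_assoc ((X * Xᵀ) ^ j) X Xᵀ, pow_mul_comm_aux, Matrix.mul_assoc]
  have hsub : Submodule.span ℝ
      {v : Fin n → ℝ | ∃ j < n, v = ((X * Xᵀ) ^ j) *ᵥ ((X * Xᵀ) *ᵥ Y)}
      ≤ Submodule.map X.mulVecLin (Submodule.span ℝ T) := by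
    rw [Submodule.span_le]
    rintro v ⟨j, hj, rfl⟩
    exact ⟨((Xᵀ * X) ^ j) *ᵥ (Xᵀ *ᵥ Y),
      Submodule.subset_span ⟨j, hj, rfl⟩, (key j).symm⟩
  have hY : Y ∈ Submodule.map X.mulVecLin (Submodule.span ℝ T) :=
    hsub (by rw [hspan]; trivial)
  obtain ⟨β, hβ, hXβ⟩ := hY
  have hXβ' : X *ᵥ β = Y := hXβ
  refine ⟨⟨β, hβ, hXβ'⟩, ?_, ?_⟩
  · exact ⟨β, hβ, by simp [hXβ']⟩
  · rintro r ⟨γ, hγ, rfl⟩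
    exact Finset.sum_nonneg fun i _ => sq_nonneg _
end

section
/- For all integers 1 ≤ k < l < n, the minimizing residual polynomials satisfy Σ_{j=1}^n λ_j · Q̂_k(λ_j) · Q̂_l(λ_j) · p̂_j² = 0; that is, the polynomials Q̂_1, …, Q̂_{n−1} are pairwise orthogonal with respect to the discrete measure μ̂ = Σ_{j=1}^n λ_j (u_jᵀY)² δ_{λ_j}. -/
open Matrix Polynomial

lemma vmv_mul_vmv {n : ℕ} (a b c d : Fin n → ℝ) :
    vecMulVec a b * vecMulVec c d = (b ⬝ᵥ c) • vecMulVec a d := by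
  ext i j
  simp only [Matrix.mul_apply, vecMulVec_apply, Matrix.smul_apply, smul_eq_mul, dotProduct,
    Finset.sum_mul]
  apply Finset.sum_congr rfl; intro m _; ring

lemma vmv_mulVec {n : ℕ} (a b Y : Fin n → ℝ) :
    vecMulVec a b *ᵥ Y = (b ⬝ᵥ Y) • a := by
  ext i
  simp only [mulVec, vecMulVec_apply, dotProduct, Pi.smul_apply, smul_eq_mul]
  rw [Finset.sum_mul]
  apply Finset.sum_congr rfl
  intro m _; ring

lemma sum_vmv_eq_one {n : ℕ} (u : Fin n → Fin n → ℝ)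
    (hortho : ∀ i j, u i ⬝ᵥ u j = if i = j then (1:ℝ) else 0) :
    ∑ j, vecMulVec (u j) (u j) = (1 : Matrix (Fin n) (Fin n) ℝ) := by
  have hU : (Matrix.of u) * (Matrix.of u)ᵀ = 1 := by
    ext i j
    simpa [Matrix.mul_apply, dotProduct, Matrix.one_apply] using hortho i j
  have hU2 : (Matrix.of u)ᵀ * (Matrix.of u) = 1 := mul_eq_one_comm.mp hU
  ext a b
  rw [← hU2]
  simp [Matrix.sum_apply, Matrix.mul_apply, vecMulVec_apply]

lemma smul_vmv_mul {n : ℕ} (x y : ℝ) (a b c d : Fin n → ℝ) :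
    (x • vecMulVec a b) * (y • vecMulVec c d) = (x * y * (b ⬝ᵥ c)) • vecMulVec a d := by
  rw [smul_mul_assoc, mul_smul_comm, vmv_mul_vmv, smul_smul, smul_smul]

lemma aeval_spec {n : ℕ} (A : Matrix (Fin n) (Fin n) ℝ) (lam : Fin n → ℝ)
    (u : Fin n → Fin n → ℝ)
    (hortho : ∀ i j, u i ⬝ᵥ u j = if i = j then (1:ℝ) else 0)
    (hA : A = ∑ i, lam i • vecMulVec (u i) (u i)) (Q : Polynomial ℝ) :
    Polynomial.aeval A Q = ∑ j, (Q.eval (lam j)) • vecMulVec (u j) (u j) := by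
  induction Q using Polynomial.induction_on with
  | C a =>
      simp only [aeval_C, eval_C, ← Finset.smul_sum, sum_vmv_eq_one u hortho]
      simp [Algebra.algebraMap_eq_smul_one]
  | add p q hp hq =>
      simp only [map_add, hp, hq, eval_add, add_smul, Finset.sum_add_distrib]
  | monomial m a hm =>
      have h1 : (Polynomial.C a * Polynomial.X ^ (m + 1)) =
          (Polynomial.C a * Polynomial.X ^ m) * Polynomial.X := by ring
      rw [h1, _root_.map_mul, hm, aeval_X, hA, Finset.sum_mul]
      apply Finset.sum_congr rfl
      intro j _
      rw [Finset.mul_sum]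
      simp only [smul_vmv_mul, hortho]
      rw [Finset.sum_eq_single j]
      · simp [eval_mul]
      · intro i _ hij; simp [Ne.symm hij]
      · simp

lemma residual_eq {n : ℕ} (A : Matrix (Fin n) (Fin n) ℝ) (lam : Fin n → ℝ)
    (u : Fin n → Fin n → ℝ) (Y : Fin n → ℝ)
    (hortho : ∀ i j, u i ⬝ᵥ u j = if i = j then (1:ℝ) else 0)
    (hA : A = ∑ i, lam i • vecMulVec (u i) (u i)) (Q : Polynomial ℝ) :
    ∑ i, ((Polynomial.aeval A Q *ᵥ Y) i) ^ 2
      = ∑ j, (Q.eval (lam j)) ^ 2 * (u j ⬝ᵥ Y) ^ 2 := by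
  have hv : Polynomial.aeval A Q *ᵥ Y
      = ∑ j, (Q.eval (lam j) * (u j ⬝ᵥ Y)) • u j := by
    rw [aeval_spec A lam u hortho hA Q]
    ext i
    simp only [Matrix.mulVec, dotProduct, Matrix.sum_apply, Finset.sum_apply,
      Matrix.smul_apply, smul_eq_mul, vecMulVec_apply, Pi.smul_apply, Finset.sum_mul]
    rw [Finset.sum_comm]
    apply Finset.sum_congr rfl
    intro j _
    rw [Finset.mul_sum, Finset.sum_mul]
    apply Finset.sum_congr rfl
    intro m _
    ring
  rw [hv]
  have key : ∀ i : Fin n, ((∑ j, (Q.eval (lam j) * (u j ⬝ᵥ Y)) • u j) i) ^ 2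
      = ∑ j, ∑ m, (Q.eval (lam j) * (u j ⬝ᵥ Y)) * (Q.eval (lam m) * (u m ⬝ᵥ Y))
          * (u j i * u m i) := by
    intro i
    rw [Finset.sum_apply, pow_two, Finset.sum_mul_sum]
    apply Finset.sum_congr rfl; intro j _
    apply Finset.sum_congr rfl; intro m _
    simp; ring
  simp only [key]
  rw [Finset.sum_comm]
  apply Finset.sum_congr rfl
  intro j _
  rw [Finset.sum_comm]
  rw [Finset.sum_eq_single j]
  · rw [← Finset.mul_sum]
    have : ∑ i, u j i * u j i = (1:ℝ) := by simpa [dotProduct] using hortho j j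
    rw [this]; ring
  · intro m _ hmj
    rw [← Finset.mul_sum]
    have : ∑ i, u j i * u m i = (0:ℝ) := by simpa [dotProduct, (Ne.symm hmj : j ≠ m)] using hortho j m
    rw [this]; ring
  · simp

/-- The minimizing residual polynomials Q̂_1, …, Q̂_{n−1} are pairwise
orthogonal with respect to the discrete measure Σ_j λ_j (u_jᵀY)² δ_{λ_j}:
for 1 ≤ k < l < n, Σ_{j=1}^n λ_j Q̂_k(λ_j) Q̂_l(λ_j) (u_jᵀY)² = 0. -/
theorem stmt2 {n p : ℕ} (X : Matrix (Fin n) (Fin p) ℝ) (Y : Fin n → ℝ)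
    (lam : Fin n → ℝ) (u : Fin n → Fin n → ℝ)
    (hortho : ∀ i j, u i ⬝ᵥ u j = if i = j then (1 : ℝ) else 0)
    (hspec : X * Xᵀ = ∑ i, lam i • vecMulVec (u i) (u i))
    (hanti : StrictAnti lam) (hpos : ∀ i, 0 < lam i)
    (hphat : ∀ i, u i ⬝ᵥ Y ≠ 0)
    (Qhat : ℕ → Polynomial ℝ)
    (hQmem : ∀ k, 1 ≤ k → k < n → (Qhat k).natDegree ≤ k ∧ (Qhat k).eval 0 = 1)
    (hQmin : ∀ k, 1 ≤ k → k < n → ∀ Q : Polynomial ℝ, Q.natDegree ≤ k → Q.eval 0 = 1 →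
      ∑ i, (((Polynomial.aeval (X * Xᵀ)) (Qhat k) *ᵥ Y) i) ^ 2 ≤
        ∑ i, (((Polynomial.aeval (X * Xᵀ)) Q *ᵥ Y) i) ^ 2) :
    ∀ k l : ℕ, 1 ≤ k → k < l → l < n →
      ∑ j, lam j * (Qhat k).eval (lam j) * (Qhat l).eval (lam j) * (u j ⬝ᵥ Y) ^ 2 = 0 := by
  intro k l hk1 hkl hln
  have hkn : k < n := hkl.trans hln
  have hl1 : 1 ≤ l := hk1.trans hkl.le
  obtain ⟨hdk, hek⟩ := hQmem k hk1 hkn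
  obtain ⟨hdl, hel⟩ := hQmem l hl1 hln
  set S := ∑ j, lam j * (Qhat k).eval (lam j) * (Qhat l).eval (lam j) * (u j ⬝ᵥ Y) ^ 2 with hS
  set T := ∑ j, (lam j * (Qhat k).eval (lam j)) ^ 2 * (u j ⬝ᵥ Y) ^ 2 with hT
  have key : ∀ t : ℝ, 0 ≤ T * t ^ 2 + (2 * S) * t + 0 := by
    intro t
    set Q : Polynomial ℝ := Qhat l + Polynomial.C t * (Polynomial.X * Qhat k) with hQdef
    have hQd : Q.natDegree ≤ l := by
      refine le_trans (Polynomial.natDegree_add_le _ _) (max_le hdl ?_)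
      refine le_trans (Polynomial.natDegree_C_mul_le _ _) ?_
      refine le_trans (Polynomial.natDegree_mul_le) ?_
      have : Polynomial.natDegree (Polynomial.X : Polynomial ℝ) = 1 :=
        Polynomial.natDegree_X
      omega
    have hQ0 : Q.eval 0 = 1 := by
      simp [hQdef, hel]
    have hineq := hQmin l hl1 hln Q hQd hQ0
    rw [residual_eq (X * Xᵀ) lam u Y hortho hspec,
        residual_eq (X * Xᵀ) lam u Y hortho hspec] at hineq
    have expand : ∀ j : Fin n, (Q.eval (lam j)) ^ 2 * (u j ⬝ᵥ Y) ^ 2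
        = ((Qhat l).eval (lam j)) ^ 2 * (u j ⬝ᵥ Y) ^ 2
          + 2 * t * (lam j * (Qhat k).eval (lam j) * (Qhat l).eval (lam j) * (u j ⬝ᵥ Y) ^ 2)
          + t ^ 2 * ((lam j * (Qhat k).eval (lam j)) ^ 2 * (u j ⬝ᵥ Y) ^ 2) := by
      intro j
      simp only [hQdef, Polynomial.eval_add, Polynomial.eval_mul, Polynomial.eval_C,
        Polynomial.eval_X]
      ring
    rw [Finset.sum_congr rfl fun j _ => expand j, Finset.sum_add_distrib,
        Finset.sum_add_distrib, ← Finset.mul_sum, ← Finset.mul_sum, ← hS, ← hT] at hineq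
    nlinarith [hineq]
  have hd : discrim T (2 * S) 0 ≤ 0 := discrim_le_zero (fun x => by simpa [sq] using key x)
  rw [discrim] at hd
  nlinarith [hd]
end

section
/- For every 1 ≤ k < n, define the moments m̂_j = Σ_{i=1}^n λ_i^{j+1} p̂_i² for j ∈ ℕ, let Ĥ be the k×k matrix with entries Ĥ_{r,s} = m̂_{r+s−1} (1 ≤ r,s ≤ k), and let Ĝ(x) be the (k+1)×(k+1) matrix whose entry in row r ≤ k and column s is m̂_{r+s−2} and whose last row is (1, x, x², …, x^k). Then det Ĥ ≠ 0 and the minimizing residual polynomial satisfies Q̂_k(x) = (−1)^k · det Ĝ(x) / det Ĥ for all x ∈ ℝ. -/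
open Matrix Polynomial
lemma aux_det (k : ℕ) (mhat : ℕ → ℝ) (H : Matrix (Fin k) (Fin k) ℝ)
    (G : ℝ → Matrix (Fin (k+1)) (Fin (k+1)) ℝ)
    (hH : ∀ r s, H r s = mhat ((r:ℕ)+(s:ℕ)+1))
    (hG : ∀ x r s, G x r s = if (r:ℕ) < k then mhat ((r:ℕ)+(s:ℕ)) else x ^ (s:ℕ)) :
    ∃ c : Fin (k+1) → ℝ, (∀ x, (G x).det = ∑ s : Fin (k+1), x^(s:ℕ) * c s) ∧ c 0 = (-1:ℝ)^k * H.det ∧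
      ∀ t, t < k → ∑ s : Fin (k+1), mhat (t+(s:ℕ)) * c s = 0 := by
  refine ⟨fun s => (-1:ℝ) ^ (k + (s:ℕ)) * ((G 0).submatrix (Fin.last k).succAbove s.succAbove).det,
    ?_, ?_, ?_⟩
  · intro x
    rw [det_succ_row (G x) (Fin.last k)]
    refine Finset.sum_congr rfl fun s _ => ?_
    have h1 : (G x).submatrix (Fin.last k).succAbove s.succAbove
        = (G 0).submatrix (Fin.last k).succAbove s.succAbove := by
      ext r t
      simp only [submatrix_apply, Fin.succAbove_last, hG]
      have : ((Fin.castSucc r : Fin (k+1)) : ℕ) < k := r.is_lt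
      rw [if_pos this, if_pos this]
    have h2 : (G x) (Fin.last k) s = x ^ (s:ℕ) := by
      rw [hG]; simp
    rw [h1, h2, Fin.val_last]; ring
  · have h3 : (G 0).submatrix (Fin.last k).succAbove ((0 : Fin (k+1)).succAbove) = H := by
      ext r s
      simp only [submatrix_apply, Fin.succAbove_last, Fin.succAbove_zero, hG, hH]
      have : ((Fin.castSucc r : Fin (k+1)) : ℕ) < k := r.is_lt
      rw [if_pos this]
      simp only [Fin.coe_castSucc, Fin.val_succ]
      congr 1
    simp only [Fin.val_zero, add_zero, h3]
  · intro t ht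
    set M : Matrix (Fin (k+1)) (Fin (k+1)) ℝ :=
      fun r s => if (r:ℕ) < k then mhat ((r:ℕ)+(s:ℕ)) else mhat (t + (s:ℕ)) with hM
    have hMdet : M.det = 0 := by
      refine det_zero_of_row_eq (i := (⟨t, by omega⟩ : Fin (k+1))) (j := Fin.last k) ?_ ?_
      · intro h; have := congrArg Fin.val h; simp [Fin.val_last] at this; omega
      · funext s; simp [hM, Fin.val_last, ht]
    have hexp := det_succ_row M (Fin.last k)
    rw [hMdet] at hexp
    have hMsub : ∀ j : Fin (k+1), M.submatrix (Fin.last k).succAbove j.succAbove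
        = (G 0).submatrix (Fin.last k).succAbove j.succAbove := by
      intro j; ext r s
      simp only [submatrix_apply, Fin.succAbove_last, hM, hG]
      have : ((Fin.castSucc r : Fin (k+1)) : ℕ) < k := r.is_lt
      simp [Matrix.submatrix, r.is_lt]
    rw [eq_comm]
    calc (0:ℝ) = ∑ j : Fin (k+1), (-1)^((Fin.last k : ℕ)+(j:ℕ)) * M (Fin.last k) j
          * (M.submatrix (Fin.last k).succAbove j.succAbove).det := hexp
      _ = ∑ s : Fin (k+1), mhat (t+(s:ℕ)) *
          ((-1:ℝ)^(k+(s:ℕ)) * ((G 0).submatrix (Fin.last k).succAbove s.succAbove).det) := by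
        refine Finset.sum_congr rfl fun s _ => ?_
        rw [hMsub s, Fin.val_last]
        have : M (Fin.last k) s = mhat (t + (s:ℕ)) := by simp [hM]
        rw [this]; ring
lemma aux_detH (n k : ℕ) (hkn : k < n) (lam : Fin n → ℝ) (w : Fin n → ℝ)
    (hanti : StrictAnti lam) (hw : ∀ i, w i ≠ 0)
    (H : Matrix (Fin k) (Fin k) ℝ)
    (hH : ∀ r s, H r s = ∑ i, lam i ^ ((r:ℕ)+(s:ℕ)+2) * w i ^ 2) : H.det ≠ 0 := by
  intro hdet
  obtain ⟨v, hv0, hv⟩ := (Matrix.exists_mulVec_eq_zero_iff).mpr hdet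
  set V : Matrix (Fin k) (Fin n) ℝ := fun r i => lam i ^ ((r:ℕ)+1) * w i with hV
  have hHV : H = V * Vᵀ := by
    ext r s
    rw [hH, Matrix.mul_apply]
    refine Finset.sum_congr rfl fun i _ => ?_
    simp only [transpose_apply, hV, Matrix.transpose, of_apply]
    rw [show (r:ℕ)+(s:ℕ)+2 = ((r:ℕ)+1) + ((s:ℕ)+1) by omega, pow_add]
    ring
  have hx : (v ᵥ* V) ⬝ᵥ (v ᵥ* V) = 0 := by
    calc (v ᵥ* V) ⬝ᵥ (v ᵥ* V) = v ⬝ᵥ (V *ᵥ (v ᵥ* V)) := (dotProduct_mulVec v V _).symm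
      _ = (V *ᵥ (v ᵥ* V)) ⬝ᵥ v := dotProduct_comm _ _
      _ = ((v ᵥ* V) ᵥ* Vᵀ) ⬝ᵥ v := by rw [vecMul_transpose]
      _ = (v ᵥ* (V * Vᵀ)) ⬝ᵥ v := by rw [vecMul_vecMul]
      _ = v ⬝ᵥ ((V * Vᵀ) *ᵥ v) := (dotProduct_mulVec v _ v).symm
      _ = 0 := by rw [← hHV, hv, dotProduct_zero]
  have hx0 : ∀ i, (v ᵥ* V) i = 0 := by
    have hz : ∀ i ∈ Finset.univ, (v ᵥ* V) i * (v ᵥ* V) i = 0 :=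
      (Finset.sum_eq_zero_iff_of_nonneg
        (fun i _ => mul_self_nonneg ((v ᵥ* V) i))).mp (by simpa [dotProduct] using hx)
    intro i
    have := hz i (Finset.mem_univ i)
    nlinarith [this]
  set F : Polynomial ℝ := ∑ r : Fin k, C (v r) * X ^ ((r:ℕ)+1) with hF
  have hFdeg : F.natDegree ≤ k := by
    refine natDegree_sum_le_of_forall_le _ _ fun r _ => ?_
    refine (natDegree_C_mul_le _ _).trans ?_
    simpa using Nat.succ_le_of_lt r.is_lt
  have hFeval : ∀ i, F.eval (lam i) = 0 := by
    intro i
    have h1 := hx0 i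
    simp only [vecMul, dotProduct, hV] at h1
    have h2 : (∑ r : Fin k, v r * lam i ^ ((r:ℕ)+1)) * w i = 0 := by
      rw [Finset.sum_mul]
      rw [← h1]
      exact Finset.sum_congr rfl fun r _ => by ring
    have h3 := (mul_eq_zero.mp h2).resolve_right (hw i)
    simp only [hF, eval_finset_sum, eval_mul, eval_C, eval_pow, eval_X]
    exact h3
  have hF0 : F = 0 := by
    refine Polynomial.eq_zero_of_natDegree_lt_card_of_eval_eq_zero F hanti.injective hFeval ?_
    simpa using lt_of_le_of_lt hFdeg hkn
  apply hv0
  funext r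
  have : F.coeff ((r:ℕ)+1) = v r := by
    rw [hF, finset_sum_coeff]
    rw [Finset.sum_eq_single r]
    · simp
    · intro b _ hb
      simp only [coeff_C_mul, coeff_X_pow]
      rw [if_neg, mul_zero]
      intro h
      exact hb (Fin.ext (by omega))
    · simp
  rw [hF0] at this
  simpa using this.symm
lemma aux_quad {n p : ℕ} (X : Matrix (Fin n) (Fin p) ℝ) (Y : Fin n → ℝ) (lam : Fin n → ℝ)
    (u : Fin n → Fin n → ℝ)
    (hortho : ∀ i j, u i ⬝ᵥ u j = if i = j then (1 : ℝ) else 0)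
    (hspec : X * Xᵀ = ∑ i, lam i • vecMulVec (u i) (u i)) (Q : Polynomial ℝ) :
    ∑ i, (((Polynomial.aeval (X * Xᵀ)) Q *ᵥ Y) i) ^ 2
      = ∑ i, (Q.eval (lam i))^2 * (u i ⬝ᵥ Y)^2 := by
  set w : Fin n → ℝ := fun i => u i ⬝ᵥ Y with hw
  -- eigenvectors
  have hAu : ∀ j, (X * Xᵀ) *ᵥ u j = lam j • u j := by
    intro j
    rw [hspec]
    funext a
    simp only [mulVec, dotProduct, Matrix.sum_apply, smul_eq_mul, Finset.sum_mul]
    rw [Finset.sum_comm]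
    simp only [Matrix.smul_apply, vecMulVec_apply, smul_eq_mul]
    have h1 : ∀ i, ∑ x, lam i * (u i a * u i x) * u j x = lam i * u i a * (u i ⬝ᵥ u j) := by
      intro i
      simp only [dotProduct, Finset.mul_sum]
      exact Finset.sum_congr rfl fun x _ => by ring
    rw [Finset.sum_congr rfl fun i _ => h1 i]
    simp only [hortho, mul_ite, mul_one, mul_zero]
    rw [Finset.sum_ite_eq' Finset.univ j (fun i => lam i * u i a)]
    simp [mul_comm]
  have hpow : ∀ (m : ℕ) j, (X * Xᵀ) ^ m *ᵥ u j = lam j ^ m • u j := by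
    intro m j
    induction m with
    | zero => simp
    | succ m ih =>
        rw [pow_succ', pow_succ', ← mulVec_mulVec, ih, mulVec_smul, hAu, smul_smul, mul_comm]
  have haev : ∀ (Q : Polynomial ℝ) j, (aeval (X * Xᵀ) Q) *ᵥ u j = Q.eval (lam j) • u j := by
    intro Q j
    induction Q using Polynomial.induction_on' with
    | add p q hp hq => rw [map_add, add_mulVec, hp, hq, eval_add, add_smul]
    | monomial m a =>
        rw [aeval_monomial, eval_monomial, Algebra.algebraMap_eq_smul_one, smul_mul_assoc,
          one_mul, smul_mulVec, hpow, smul_smul]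
  -- decomposition of Y
  have hYdec : Y = ∑ i, w i • u i := by
    set U : Matrix (Fin n) (Fin n) ℝ := Matrix.of u with hU
    have hUU : U * Uᵀ = 1 := by
      ext i j
      simp [Matrix.mul_apply, Matrix.one_apply, ← hortho i j, dotProduct, U]
    have hUtU : Uᵀ * U = 1 := mul_eq_one_comm.mp hUU
    have hid : Uᵀ *ᵥ (U *ᵥ Y) = Y := by rw [mulVec_mulVec, hUtU, one_mulVec]
    funext j
    calc Y j = (Uᵀ *ᵥ (U *ᵥ Y)) j := by rw [hid]
      _ = ∑ i, (u i ⬝ᵥ Y) * u i j := by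
          simp [mulVec, dotProduct, transpose_apply, U]
          exact Finset.sum_congr rfl fun i _ => by ring
      _ = (∑ i, w i • u i) j := by simp [hw]
  have hmv : (aeval (X * Xᵀ) Q) *ᵥ Y = fun j => ∑ i, (w i * Q.eval (lam i)) * u i j := by
    conv_lhs => rw [hYdec]
    rw [show (aeval (X * Xᵀ)) Q *ᵥ (∑ i, w i • u i) = ∑ i, (aeval (X * Xᵀ)) Q *ᵥ (w i • u i) by
      have := map_sum (Matrix.mulVecLin ((aeval (X * Xᵀ)) Q)) (fun i => w i • u i) Finset.univ
      simp only [Matrix.mulVecLin_apply] at this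
      exact this]
    funext j
    simp only [Finset.sum_apply]
    refine Finset.sum_congr rfl fun i _ => ?_
    rw [mulVec_smul, haev]
    simp [smul_smul]
    ring
  rw [hmv]
  have horthsum : ∀ c d : Fin n → ℝ,
      ∑ j, (∑ i, c i * u i j) * (∑ i, d i * u i j) = ∑ i, c i * d i := by
    intro c d
    simp_rw [Finset.sum_mul_sum]
    rw [Finset.sum_comm]
    have h1 : ∀ i, ∑ j, ∑ l, c i * u i j * (d l * u l j)
        = ∑ l, c i * d l * (u i ⬝ᵥ u l) := by
      intro i
      rw [Finset.sum_comm]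
      refine Finset.sum_congr rfl fun l _ => ?_
      simp only [dotProduct, Finset.mul_sum]
      exact Finset.sum_congr rfl fun j _ => by ring
    refine Finset.sum_congr rfl fun i _ => ?_
    rw [h1]
    simp [hortho]
  calc ∑ j, (∑ i, (w i * Q.eval (lam i)) * u i j) ^ 2
      = ∑ j, (∑ i, (w i * Q.eval (lam i)) * u i j) * (∑ i, (w i * Q.eval (lam i)) * u i j) := by
        refine Finset.sum_congr rfl fun j _ => sq ((∑ i, (w i * Q.eval (lam i)) * u i j))
    _ = ∑ i, (w i * Q.eval (lam i)) * (w i * Q.eval (lam i)) := horthsum _ _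
    _ = ∑ i, (Q.eval (lam i))^2 * w i^2 := Finset.sum_congr rfl fun i _ => by ring


/-- With moments m̂_j = Σ_i λ_i^{j+1} p̂_i², Hankel-type matrices
Ĥ_{r,s} = m̂_{r+s−1} (k×k) and Ĝ(x) with rows of moments and last row (1, x, …, x^k),
we have det Ĥ ≠ 0 and Q̂_k(x) = (−1)^k det Ĝ(x) / det Ĥ. -/
theorem stmt3 {n p : ℕ} (X : Matrix (Fin n) (Fin p) ℝ) (Y : Fin n → ℝ)
    (lam : Fin n → ℝ) (u : Fin n → Fin n → ℝ)
    (hortho : ∀ i j, u i ⬝ᵥ u j = if i = j then (1 : ℝ) else 0)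
    (hspec : X * Xᵀ = ∑ i, lam i • vecMulVec (u i) (u i))
    (hanti : StrictAnti lam) (hpos : ∀ i, 0 < lam i)
    (hphat : ∀ i, u i ⬝ᵥ Y ≠ 0)
    (Qhat : ℕ → Polynomial ℝ)
    (hQmem : ∀ k, 1 ≤ k → k < n → (Qhat k).natDegree ≤ k ∧ (Qhat k).eval 0 = 1)
    (hQmin : ∀ k, 1 ≤ k → k < n → ∀ Q : Polynomial ℝ, Q.natDegree ≤ k → Q.eval 0 = 1 →
      ∑ i, (((Polynomial.aeval (X * Xᵀ)) (Qhat k) *ᵥ Y) i) ^ 2 ≤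
        ∑ i, (((Polynomial.aeval (X * Xᵀ)) Q *ᵥ Y) i) ^ 2)
    (k : ℕ) (hk1 : 1 ≤ k) (hkn : k < n) :
    let mhat : ℕ → ℝ := fun j => ∑ i, lam i ^ (j + 1) * (u i ⬝ᵥ Y) ^ 2
    let H : Matrix (Fin k) (Fin k) ℝ := fun r s => mhat ((r : ℕ) + (s : ℕ) + 1)
    let G : ℝ → Matrix (Fin (k + 1)) (Fin (k + 1)) ℝ := fun x r s =>
      if (r : ℕ) < k then mhat ((r : ℕ) + (s : ℕ)) else x ^ (s : ℕ)
    H.det ≠ 0 ∧ ∀ x : ℝ, (Qhat k).eval x = (-1 : ℝ) ^ k * (G x).det / H.det := by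
  
  intro mhat H G
  set w : Fin n → ℝ := fun i => u i ⬝ᵥ Y with hw
  have hmr : ∀ j : ℕ, mhat j = ∑ i, lam i ^ (j + 1) * w i ^ 2 := fun j => rfl
  -- det H ≠ 0
  have hdetH : H.det ≠ 0 := by
    refine aux_detH n k hkn lam w hanti hphat H ?_
    intro r s
    rw [show (r:ℕ)+(s:ℕ)+2 = ((r:ℕ)+(s:ℕ)+1)+1 by omega]
  refine ⟨hdetH, ?_⟩
  obtain ⟨c, hdetG, hc0, hKI⟩ := aux_det k mhat H G (fun r s => rfl) (fun x r s => rfl)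
  -- the candidate polynomial
  set P : Polynomial ℝ := ∑ s : Fin (k+1), C (c s) * Polynomial.X ^ (s:ℕ) with hP
  have hPe : ∀ x : ℝ, P.eval x = ∑ s : Fin (k+1), c s * x ^ (s:ℕ) := by
    intro x; simp [hP, eval_finset_sum]
  set Qs : Polynomial ℝ := C ((-1:ℝ)^k / H.det) * P with hQsdef
  have hQse : ∀ x : ℝ, Qs.eval x = ((-1:ℝ)^k / H.det) * ∑ s : Fin (k+1), c s * x ^ (s:ℕ) := by
    intro x; rw [hQsdef, eval_mul, eval_C, hPe]
  have hQsform : ∀ x : ℝ, Qs.eval x = (-1 : ℝ) ^ k * (G x).det / H.det := by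
    intro x
    rw [hQse, hdetG, div_mul_eq_mul_div]
    congr 1
    rw [Finset.mul_sum, Finset.mul_sum]
    exact Finset.sum_congr rfl fun s _ => by ring
  have hQsdeg : Qs.natDegree ≤ k := by
    refine (natDegree_C_mul_le _ _).trans ?_
    refine natDegree_sum_le_of_forall_le _ _ fun s _ => ?_
    refine (natDegree_C_mul_le _ _).trans ?_
    simpa [natDegree_X_pow] using Nat.lt_succ_iff.mp s.is_lt
  have hQs0 : Qs.eval 0 = 1 := by
    have h1 : ∑ s : Fin (k+1), c s * (0:ℝ) ^ (s:ℕ) = c 0 := by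
      rw [Finset.sum_eq_single 0]
      · simp
      · intro b _ hb
        rw [zero_pow (by simpa using fun h => hb (Fin.ext h)), mul_zero]
      · simp
    rw [hQse, h1, hc0]
    rw [div_mul_eq_mul_div, ← mul_assoc, ← pow_add]
    rw [Even.neg_one_pow ⟨k, rfl⟩, one_mul, div_self hdetH]
  -- normal equations
  have hNE : ∀ t, t < k → ∑ i, lam i ^ (t+1) * (Qs.eval (lam i) * w i ^ 2) = 0 := by
    intro t ht
    have step1 : ∀ i, lam i ^ (t+1) * (Qs.eval (lam i) * w i ^ 2)
        = ((-1:ℝ)^k / H.det) * ∑ s : Fin (k+1), c s * (lam i ^ ((t+(s:ℕ))+1) * w i ^ 2) := by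
      intro i
      rw [hQse]
      simp only [Finset.mul_sum, Finset.sum_mul]
      refine Finset.sum_congr rfl fun s _ => ?_
      rw [show (t+(s:ℕ))+1 = (t+1)+(s:ℕ) by omega, pow_add]
      ring
    rw [Finset.sum_congr rfl fun i _ => step1 i]
    rw [← Finset.mul_sum, Finset.sum_comm]
    have step2 : ∑ s : Fin (k+1), ∑ i, c s * (lam i ^ ((t+(s:ℕ))+1) * w i ^ 2)
        = ∑ s : Fin (k+1), mhat (t+(s:ℕ)) * c s := by
      refine Finset.sum_congr rfl fun s _ => ?_
      rw [← Finset.mul_sum, hmr (t+(s:ℕ))]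
      ring
    rw [step2, hKI t ht, mul_zero]
  -- orthogonality to differences
  have horth : ∀ D : Polynomial ℝ, D.natDegree ≤ k → D.eval 0 = 0 →
      ∑ i, D.eval (lam i) * (Qs.eval (lam i) * w i ^ 2) = 0 := by
    intro D hdeg h0
    have hDe : ∀ y : ℝ, D.eval y = ∑ t ∈ Finset.range (k+1), D.coeff t * y ^ t :=
      fun y => eval_eq_sum_range' (lt_of_le_of_lt hdeg (Nat.lt_succ_self k)) y
    have step1 : ∀ i, D.eval (lam i) * (Qs.eval (lam i) * w i ^ 2)
        = ∑ t ∈ Finset.range (k+1), D.coeff t * (lam i ^ t * (Qs.eval (lam i) * w i ^ 2)) := by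
      intro i
      rw [hDe, Finset.sum_mul]
      exact Finset.sum_congr rfl fun t _ => by ring
    rw [Finset.sum_congr rfl fun i _ => step1 i, Finset.sum_comm]
    refine Finset.sum_eq_zero fun t htm => ?_
    rw [← Finset.mul_sum]
    match t with
    | 0 =>
      rw [coeff_zero_eq_eval_zero, h0, zero_mul]
    | (t'+1) =>
      have ht' : t' < k := by
        have := Finset.mem_range.mp htm; omega
      rw [hNE t' ht', mul_zero]
  -- objective values
  have hobj : ∀ Q : Polynomial ℝ, ∑ i, (((Polynomial.aeval (X * Xᵀ)) Q *ᵥ Y) i) ^ 2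
      = ∑ i, (Q.eval (lam i))^2 * w i ^ 2 := fun Q => aux_quad X Y lam u hortho hspec Q
  obtain ⟨hQhdeg, hQh0⟩ := hQmem k hk1 hkn
  have hmin := hQmin k hk1 hkn Qs hQsdeg hQs0
  rw [hobj (Qhat k), hobj Qs] at hmin
  set D : Polynomial ℝ := Qhat k - Qs with hD
  have hDdeg : D.natDegree ≤ k := le_trans (natDegree_sub_le _ _) (max_le hQhdeg hQsdeg)
  have hD0 : D.eval 0 = 0 := by rw [hD, eval_sub, hQh0, hQs0, sub_self]
  have hcross := horth D hDdeg hD0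
  have hexpand : ∑ i, ((Qhat k).eval (lam i))^2 * w i ^ 2
      = ∑ i, (Qs.eval (lam i))^2 * w i ^ 2 + ∑ i, (D.eval (lam i))^2 * w i ^ 2 := by
    have hptw : ∀ i, ((Qhat k).eval (lam i))^2 * w i ^ 2
        = (Qs.eval (lam i))^2 * w i ^ 2 + (D.eval (lam i))^2 * w i ^ 2
          + 2 * (D.eval (lam i) * (Qs.eval (lam i) * w i ^ 2)) := by
      intro i
      rw [hD, eval_sub]
      ring
    rw [Finset.sum_congr rfl fun i _ => hptw i]
    rw [Finset.sum_add_distrib, Finset.sum_add_distrib, ← Finset.mul_sum, hcross]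
    ring
  have hDzero : ∑ i, (D.eval (lam i))^2 * w i ^ 2 = 0 := by
    rw [hexpand] at hmin
    have hge : (0:ℝ) ≤ ∑ i, (D.eval (lam i))^2 * w i ^ 2 :=
      Finset.sum_nonneg fun i _ => mul_nonneg (sq_nonneg _) (sq_nonneg _)
    linarith
  have hDev : ∀ i, D.eval (lam i) = 0 := by
    have hz := (Finset.sum_eq_zero_iff_of_nonneg
      (fun i (_ : i ∈ Finset.univ) => mul_nonneg (sq_nonneg ((D.eval (lam i))))
        (sq_nonneg (w i)))).mp hDzero
    intro i
    have h1 := hz i (Finset.mem_univ i)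
    have h3 : w i ≠ 0 := hphat i
    rcases mul_eq_zero.mp h1 with h | h
    · exact pow_eq_zero_iff (by norm_num : (2:ℕ) ≠ 0) |>.mp h
    · exact absurd (pow_eq_zero_iff (by norm_num : (2:ℕ) ≠ 0) |>.mp h) h3
  have hDzero' : D = 0 := by
    refine Polynomial.eq_zero_of_natDegree_lt_card_of_eval_eq_zero D hanti.injective hDev ?_
    simpa using lt_of_le_of_lt hDdeg hkn
  intro x
  have : (Qhat k).eval x = Qs.eval x := by
    have h4 : Qhat k = Qs := sub_eq_zero.mp hDzero'
    rw [h4]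
  rw [this, hQsform]
end

section
/- For every 1 ≤ k < n and every 1 ≤ i ≤ n, the minimizing residual polynomial satisfies Q̂_k(λ_i) = (−1)^k · [Σ_{(j_1,…,j_k)∈I_{k,i}} p̂_{j_1}²⋯p̂_{j_k}² · V(λ_{j_1},…,λ_{j_k},λ_i) · λ_{j_1}¹ λ_{j_2}² ⋯ λ_{j_k}^k] / [Σ_{(j_1,…,j_k)∈I_k} p̂_{j_1}²⋯p̂_{j_k}² · V(λ_{j_1},…,λ_{j_k}) · λ_{j_1}² λ_{j_2}³ ⋯ λ_{j_k}^{k+1}], where I_k is the set of k-tuples of pairwise distinct indices from {1,…,n} and I_{k,i} is the set of k-tuples of pairwise distinct indices from {1,…,n} all different from i. -/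
open Matrix Polynomial Finset

/-- Vandermonde product V(x_1,…,x_m) = ∏_{q<r} (x_r − x_q). -/
def vand {m : ℕ} (x : Fin m → ℝ) : ℝ :=
  ∏ r : Fin m, ∏ q ∈ Finset.univ.filter (fun q => q < r), (x r - x q)

lemma vand_eq_det {m : ℕ} (x : Fin m → ℝ) : vand x = (Matrix.vandermonde x).det := by
  rw [Matrix.det_vandermonde]
  unfold vand
  exact Finset.prod_comm' (fun r q => by simp [Finset.mem_Ioi])

lemma vand_snoc {m : ℕ} (y : Fin m → ℝ) (a : ℝ) :
    vand (Fin.snoc y a) = vand y * ∏ l, (a - y l) := by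
  unfold vand
  rw [Fin.prod_univ_castSucc]
  congr 1
  · apply Finset.prod_congr rfl
    intro r _
    rw [Finset.prod_filter, Fin.prod_univ_castSucc, Finset.prod_filter]
    simp [Fin.castSucc_lt_castSucc_iff, (Fin.castSucc_lt_last _).not_gt]
  · rw [Finset.prod_filter, Fin.prod_univ_castSucc]
    simp [Fin.castSucc_lt_last]

lemma vand_cons {m : ℕ} (a : ℝ) (y : Fin m → ℝ) :
    vand (Fin.cons a y) = (∏ l, (y l - a)) * vand y := by
  unfold vand
  rw [Fin.prod_univ_succ, ← Finset.prod_mul_distrib]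
  simp only [Finset.filter_eq_empty_iff.mpr (fun q _ => Fin.not_lt_zero q), Finset.prod_empty,
    one_mul]
  apply Finset.prod_congr rfl
  intro r _
  rw [Finset.prod_filter, Fin.prod_univ_succ, Finset.prod_filter]
  simp [Fin.succ_lt_succ_iff, Fin.succ_pos]

lemma vand_eq_zero {m : ℕ} {x : Fin m → ℝ} (h : ¬ Function.Injective x) : vand x = 0 := by
  simp only [Function.Injective, not_forall] at h
  obtain ⟨q, r, hx, hne⟩ := h
  rcases lt_or_gt_of_ne hne with hlt | hlt
  · exact Finset.prod_eq_zero (Finset.mem_univ r)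
      (Finset.prod_eq_zero (Finset.mem_filter.mpr ⟨Finset.mem_univ q, hlt⟩) (by rw [hx, sub_self]))
  · exact Finset.prod_eq_zero (Finset.mem_univ q)
      (Finset.prod_eq_zero (Finset.mem_filter.mpr ⟨Finset.mem_univ r, hlt⟩) (by rw [hx, sub_self]))

lemma det_expand {m n : ℕ} (c : Fin m → Fin n → ℝ) (v : Fin n → Fin m → ℝ) :
    (Matrix.of fun r : Fin m => ∑ i : Fin n, c r i • v i).det
      = ∑ J : Fin m → Fin n, (∏ r, c r (J r)) * (Matrix.of fun r => v (J r)).det := by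
  have h := (Matrix.detRowAlternating :
      (Fin m → ℝ) [⋀^Fin m]→ₗ[ℝ] ℝ).toMultilinearMap.map_sum (g := fun r i => c r i • v i)
  simp only [AlternatingMap.coe_multilinearMap] at h
  show (Matrix.detRowAlternating : (Fin m → ℝ) [⋀^Fin m]→ₗ[ℝ] ℝ) (fun r => ∑ i, c r i • v i) = _
  rw [h]
  apply Finset.sum_congr rfl
  intro J _
  have := (Matrix.detRowAlternating :
      (Fin m → ℝ) [⋀^Fin m]→ₗ[ℝ] ℝ).toMultilinearMap.map_smul_univ
      (fun r => c r (J r)) (fun r => v (J r))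
  simp only [AlternatingMap.coe_multilinearMap] at this
  rw [this, smul_eq_mul]
  rfl

lemma det_pow_shift {m : ℕ} (z : Fin m → ℝ) :
    (Matrix.of fun (r s : Fin m) => z r ^ ((s : ℕ) + 1)).det = (∏ r, z r) * vand z := by
  rw [vand_eq_det]
  have : (Matrix.of fun (r s : Fin m) => z r ^ ((s : ℕ) + 1))
      = Matrix.of fun r s => z r * Matrix.vandermonde z r s := by
    ext r s; simp [Matrix.vandermonde, pow_succ']
  rw [this]
  exact Matrix.det_mul_column z _

lemma moment_det {m n : ℕ} (w lam : Fin n → ℝ) (e : Fin m → ℕ) :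
    (Matrix.of fun (r s : Fin m) => ∑ i, w i * lam i ^ (e r + (s : ℕ))).det
      = ∑ J : Fin m → Fin n, (∏ r, w (J r) * lam (J r) ^ e r) * vand (fun r => lam (J r)) := by
  have h1 : (Matrix.of fun (r s : Fin m) => ∑ i, w i * lam i ^ (e r + (s : ℕ)))
      = Matrix.of fun r : Fin m => ∑ i : Fin n, (w i * lam i ^ e r) • (fun s : Fin m => lam i ^ (s : ℕ)) := by
    ext r s
    simp [Finset.sum_apply, pow_add, mul_assoc]
  rw [h1, det_expand]
  apply Finset.sum_congr rfl
  intro J _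
  rw [vand_eq_det]
  rfl

noncomputable def Qstar (k : ℕ) {n : ℕ} (w lam : Fin n → ℝ) : Polynomial ℝ :=
  ∑ j : Fin k → Fin n,
    Polynomial.C ((∏ l, w (j l) * lam (j l) ^ ((l : ℕ) + 1)) * vand (fun l => lam (j l))) *
      ∏ l, (Polynomial.X - Polynomial.C (lam (j l)))

lemma Qstar_eval (k : ℕ) {n : ℕ} (w lam : Fin n → ℝ) (x : ℝ) :
    (Qstar k w lam).eval x
      = ∑ j : Fin k → Fin n,
          (∏ l, w (j l) * lam (j l) ^ ((l : ℕ) + 1)) * vand (fun l => lam (j l)) *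
            ∏ l, (x - lam (j l)) := by
  unfold Qstar
  rw [Polynomial.eval_finset_sum]
  apply Finset.sum_congr rfl
  intro j _
  rw [Polynomial.eval_mul, Polynomial.eval_C, Polynomial.eval_prod]
  simp

lemma Qstar_natDegree_le (k : ℕ) {n : ℕ} (w lam : Fin n → ℝ) :
    (Qstar k w lam).natDegree ≤ k := by
  unfold Qstar
  apply Polynomial.natDegree_sum_le_of_forall_le
  intro j _
  refine (Polynomial.natDegree_C_mul_le _ _).trans ?_
  refine (Polynomial.natDegree_prod_le _ _).trans ?_
  have : ∀ l : Fin k, (Polynomial.X - Polynomial.C (lam (j l))).natDegree = 1 := fun l =>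
    Polynomial.natDegree_X_sub_C _
  simp [this]

lemma usum_eq {n : ℕ} (u : Fin n → Fin n → ℝ)
    (hortho : ∀ i j, u i ⬝ᵥ u j = if i = j then (1 : ℝ) else 0) (a b : Fin n) :
    ∑ j, u j a * u j b = if a = b then (1 : ℝ) else 0 := by
  classical
  set U : Matrix (Fin n) (Fin n) ℝ := Matrix.of u with hU
  have h1 : U * Uᵀ = 1 := by
    ext i j
    have := hortho i j
    simp only [Matrix.mul_apply, Matrix.transpose_apply, Matrix.one_apply]
    simpa [dotProduct, hU] using this
  have h2 : Uᵀ * U = 1 := mul_eq_one_comm.mp h1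
  have := congrFun (congrFun h2 a) b
  simpa [Matrix.mul_apply, Matrix.transpose_apply, Matrix.one_apply, hU] using this

lemma aeval_mulVec_u {n p : ℕ} (X : Matrix (Fin n) (Fin p) ℝ) (lam : Fin n → ℝ)
    (u : Fin n → Fin n → ℝ)
    (hortho : ∀ i j, u i ⬝ᵥ u j = if i = j then (1 : ℝ) else 0)
    (hspec : X * Xᵀ = ∑ i, lam i • vecMulVec (u i) (u i))
    (Q : Polynomial ℝ) (j : Fin n) :
    (Polynomial.aeval (X * Xᵀ)) Q *ᵥ u j = Q.eval (lam j) • u j := by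
  classical
  have hAu : (X * Xᵀ) *ᵥ u j = lam j • u j := by
    funext a
    rw [hspec]
    simp only [Matrix.mulVec, dotProduct, Matrix.sum_apply, Matrix.smul_apply,
      Matrix.vecMulVec_apply, smul_eq_mul, Pi.smul_apply]
    calc ∑ b, (∑ i, lam i * (u i a * u i b)) * u j b
        = ∑ b, ∑ i, lam i * (u i a * u i b) * u j b := by
          simp [Finset.sum_mul]
      _ = ∑ i, ∑ b, lam i * (u i a * u i b) * u j b := Finset.sum_comm
      _ = ∑ i, (lam i * u i a) * (u i ⬝ᵥ u j) := by
          apply Finset.sum_congr rfl; intro i _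
          rw [dotProduct, Finset.mul_sum]
          apply Finset.sum_congr rfl; intro b _; ring
      _ = lam j * u j a := by
          simp only [hortho, mul_ite, mul_one, mul_zero]
          simp
  have hpow : ∀ m : ℕ, ((X * Xᵀ) ^ m) *ᵥ u j = (lam j ^ m) • u j := by
    intro m
    induction m with
    | zero => simp
    | succ m ih =>
      rw [pow_succ', ← Matrix.mulVec_mulVec, ih, Matrix.mulVec_smul, hAu,
        smul_smul, pow_succ']
      rw [mul_comm]
  induction Q using Polynomial.induction_on' with
  | add f g hf hg =>
    rw [map_add, Matrix.add_mulVec, hf, hg, Polynomial.eval_add, add_smul]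
  | monomial m c =>
    rw [Polynomial.aeval_monomial, Polynomial.eval_monomial]
    have : (algebraMap ℝ (Matrix (Fin n) (Fin n) ℝ)) c = c • (1 : Matrix (Fin n) (Fin n) ℝ) := by
      simp [Algebra.algebraMap_eq_smul_one]
    rw [this, smul_mul_assoc, one_mul, Matrix.smul_mulVec, hpow, smul_smul]

lemma phi_eq {n p : ℕ} (X : Matrix (Fin n) (Fin p) ℝ) (Y : Fin n → ℝ) (lam : Fin n → ℝ)
    (u : Fin n → Fin n → ℝ)
    (hortho : ∀ i j, u i ⬝ᵥ u j = if i = j then (1 : ℝ) else 0)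
    (hspec : X * Xᵀ = ∑ i, lam i • vecMulVec (u i) (u i))
    (Q : Polynomial ℝ) :
    ∑ a, (((Polynomial.aeval (X * Xᵀ)) Q *ᵥ Y) a) ^ 2
      = ∑ i, (u i ⬝ᵥ Y) ^ 2 * (Q.eval (lam i)) ^ 2 := by
  classical
  have hY : Y = ∑ j, (u j ⬝ᵥ Y) • u j := by
    funext a
    simp only [Finset.sum_apply, Pi.smul_apply, smul_eq_mul]
    calc Y a = ∑ b, (if a = b then (1:ℝ) else 0) * Y b := by simp
      _ = ∑ b, (∑ j, u j a * u j b) * Y b := by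
          apply Finset.sum_congr rfl; intro b _; rw [usum_eq u hortho]
      _ = ∑ j, (u j ⬝ᵥ Y) * u j a := by
          simp only [Finset.sum_mul]
          rw [Finset.sum_comm]
          apply Finset.sum_congr rfl; intro j _
          rw [dotProduct, Finset.sum_mul]
          apply Finset.sum_congr rfl; intro b _; ring
  have hvec : (Polynomial.aeval (X * Xᵀ)) Q *ᵥ Y
      = ∑ j, ((u j ⬝ᵥ Y) * Q.eval (lam j)) • u j := by
    conv_lhs => rw [hY]
    rw [show ((Polynomial.aeval (X * Xᵀ)) Q *ᵥ ∑ j, (u j ⬝ᵥ Y) • u j)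
        = ∑ j, (Polynomial.aeval (X * Xᵀ)) Q *ᵥ ((u j ⬝ᵥ Y) • u j) by
      funext a
      simp only [Matrix.mulVec, dotProduct, Finset.sum_apply, Pi.smul_apply,
        smul_eq_mul, Finset.mul_sum]
      exact Finset.sum_comm]
    apply Finset.sum_congr rfl
    intro j _
    rw [Matrix.mulVec_smul, aeval_mulVec_u X lam u hortho hspec, smul_smul]
  rw [hvec]
  simp only [Finset.sum_apply, Pi.smul_apply, smul_eq_mul]
  calc ∑ a, (∑ j, (u j ⬝ᵥ Y) * Q.eval (lam j) * u j a) ^ 2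
      = ∑ a, ∑ j, ∑ j', ((u j ⬝ᵥ Y) * Q.eval (lam j)) * ((u j' ⬝ᵥ Y) * Q.eval (lam j'))
          * (u j a * u j' a) := by
        apply Finset.sum_congr rfl; intro a _
        rw [sq, Finset.sum_mul_sum]
        apply Finset.sum_congr rfl; intro j _
        apply Finset.sum_congr rfl; intro j' _; ring
    _ = ∑ j, ∑ j', ((u j ⬝ᵥ Y) * Q.eval (lam j)) * ((u j' ⬝ᵥ Y) * Q.eval (lam j'))
          * (u j ⬝ᵥ u j') := by
        rw [Finset.sum_comm]
        apply Finset.sum_congr rfl; intro j _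
        rw [Finset.sum_comm]
        apply Finset.sum_congr rfl; intro j' _
        rw [show u j ⬝ᵥ u j' = ∑ x, u j x * u j' x from rfl, Finset.mul_sum]
    _ = ∑ i, (u i ⬝ᵥ Y) ^ 2 * (Q.eval (lam i)) ^ 2 := by
        simp only [hortho, mul_ite, mul_one, mul_zero, Finset.sum_ite_eq, Finset.mem_univ,
          if_true]
        apply Finset.sum_congr rfl; intro i _; ring

lemma Qstar_normal {n k : ℕ} (w lam : Fin n → ℝ) (m : ℕ) (hm1 : 1 ≤ m) (hmk : m ≤ k) :
    ∑ i, w i * lam i ^ m * (Qstar k w lam).eval (lam i) = 0 := by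
  classical
  set e : Fin (k+1) → ℕ := Fin.cases m (fun l => (l:ℕ)+1) with he
  have hdet : (Matrix.of fun (r s : Fin (k+1)) => ∑ i, w i * lam i ^ (e r + (s:ℕ))).det = 0 := by
    apply Matrix.det_zero_of_row_eq (i := (0 : Fin (k+1)))
      (j := Fin.succ (⟨m-1, by omega⟩ : Fin k))
    · exact (Fin.succ_ne_zero _).symm
    · funext s
      have h0 : e 0 = m := rfl
      have h1 : e (Fin.succ (⟨m-1, by omega⟩ : Fin k)) = m := by
        simp only [he, Fin.cases_succ]
        omega
      simp only [Matrix.of_apply, h0, h1]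
  rw [moment_det] at hdet
  rw [← Equiv.sum_comp (Fin.consEquiv (fun _ : Fin (k+1) => Fin n))
    (fun J => (∏ r, w (J r) * lam (J r) ^ e r) * vand (fun r => lam (J r)))] at hdet
  simp only [Fin.consEquiv_apply] at hdet
  rw [Fintype.sum_prod_type] at hdet
  have hterm : ∀ (i : Fin n) (j : Fin k → Fin n),
      (∏ r, w ((Fin.cons i j : Fin (k+1) → Fin n) r)
          * lam ((Fin.cons i j : Fin (k+1) → Fin n) r) ^ e r)
          * vand (fun r => lam ((Fin.cons i j : Fin (k+1) → Fin n) r))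
        = (-1 : ℝ)^k * (w i * lam i ^ m *
            ((∏ l, w (j l) * lam (j l) ^ ((l : ℕ) + 1)) * vand (fun l => lam (j l)) *
              ∏ l, (lam i - lam (j l)))) := by
    intro i j
    have hprod : (∏ r, w ((Fin.cons i j : Fin (k+1) → Fin n) r)
        * lam ((Fin.cons i j : Fin (k+1) → Fin n) r) ^ e r)
        = (w i * lam i ^ m) * ∏ l, w (j l) * lam (j l) ^ ((l : ℕ) + 1) := by
      rw [Fin.prod_univ_succ]
      simp [he]
    have hcons : (fun r => lam ((Fin.cons i j : Fin (k+1) → Fin n) r))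
        = Fin.cons (lam i) (fun l => lam (j l)) := by
      funext r
      refine Fin.cases ?_ ?_ r <;> simp
    rw [hprod, hcons, vand_cons]
    have hsign : (∏ l, (lam (j l) - lam i)) = (-1:ℝ)^k * ∏ l, (lam i - lam (j l)) := by
      have h : ∀ l : Fin k, lam (j l) - lam i = (-1) * (lam i - lam (j l)) := fun l => by ring
      rw [Finset.prod_congr rfl fun l _ => h l, Finset.prod_mul_distrib, Finset.prod_const,
        Finset.card_univ, Fintype.card_fin]
    rw [hsign]
    ring
  rw [Finset.sum_congr rfl (fun i _ => Finset.sum_congr rfl (fun j _ => hterm i j))] at hdet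
  have : (-1:ℝ)^k * ∑ i, w i * lam i ^ m * (Qstar k w lam).eval (lam i) = 0 := by
    rw [← hdet, Finset.mul_sum]
    apply Finset.sum_congr rfl
    intro i _
    rw [Qstar_eval]
    simp only [Finset.mul_sum]
  have hne : ((-1:ℝ)^k) ≠ 0 := by positivity
  exact (mul_eq_zero.mp this).resolve_left hne

lemma denom_eq_det {n k : ℕ} (w lam : Fin n → ℝ) (hlaminj : Function.Injective lam) :
    (∑ j ∈ Finset.univ.filter (fun j : Fin k → Fin n => Function.Injective j),
        (∏ l, w (j l)) * vand (fun l => lam (j l)) * ∏ l, lam (j l) ^ ((l : ℕ) + 2))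
      = (Matrix.of fun (l s : Fin k) => ∑ i, w i * lam i ^ (((l : ℕ) + 2) + (s : ℕ))).det := by
  classical
  rw [moment_det w lam (fun l => (l : ℕ) + 2)]
  rw [Finset.sum_filter_of_ne]
  · apply Finset.sum_congr rfl
    intro j _
    rw [Finset.prod_mul_distrib]
    ring
  · intro j _ hne
    by_contra hinj
    apply hne
    have : ¬ Function.Injective (fun l => lam (j l)) := by
      intro hc
      exact hinj fun a b hab => hc (by simp [hab])
    rw [vand_eq_zero this]
    ring

lemma det_moment_ne_zero {n k : ℕ} (w lam : Fin n → ℝ) (hw : ∀ i, 0 < w i)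
    (hlaminj : Function.Injective lam) (hkn : k < n) :
    (Matrix.of fun (l s : Fin k) => ∑ i, w i * lam i ^ (((l : ℕ) + 2) + (s : ℕ))).det ≠ 0 := by
  classical
  intro h0
  obtain ⟨v, hv, hGv⟩ := (Matrix.exists_mulVec_eq_zero_iff).mpr h0
  set P : Polynomial ℝ := ∑ l : Fin k, Polynomial.C (v l) * Polynomial.X ^ ((l : ℕ) + 1) with hP
  have hPeval : ∀ x : ℝ, P.eval x = ∑ l, v l * x ^ ((l : ℕ) + 1) := by
    intro x; rw [hP, Polynomial.eval_finset_sum]; simp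
  have key : v ⬝ᵥ ((Matrix.of fun (l s : Fin k) =>
      ∑ i, w i * lam i ^ (((l : ℕ) + 2) + (s : ℕ))) *ᵥ v)
      = ∑ i, w i * (P.eval (lam i)) ^ 2 := by
    simp only [dotProduct, Matrix.mulVec, Matrix.of_apply, Finset.sum_mul,
      Finset.mul_sum]
    rw [Finset.sum_congr rfl (fun y (_ : y ∈ Finset.univ) => Finset.sum_comm)]
    rw [Finset.sum_comm]
    apply Finset.sum_congr rfl
    intro i _
    rw [hPeval, sq, Finset.sum_mul_sum]
    simp only [Finset.mul_sum]
    apply Finset.sum_congr rfl; intro a _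
    apply Finset.sum_congr rfl; intro b _
    rw [show ((a : ℕ) + 2) + (b : ℕ) = ((a : ℕ) + 1) + ((b : ℕ) + 1) by omega, pow_add]
    ring
  rw [hGv, dotProduct_zero] at key
  have hz : ∀ i, P.eval (lam i) = 0 := by
    intro i
    have hnn : ∀ i ∈ Finset.univ, 0 ≤ w i * (P.eval (lam i)) ^ 2 :=
      fun i _ => mul_nonneg (hw i).le (sq_nonneg _)
    have := (Finset.sum_eq_zero_iff_of_nonneg hnn).mp key.symm i (Finset.mem_univ i)
    have h2 : (P.eval (lam i)) ^ 2 = 0 := by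
      rcases mul_eq_zero.mp this with h | h
      · exact absurd h (hw i).ne'
      · exact h
    exact (pow_eq_zero_iff (two_ne_zero)).mp h2
  have hdeg : P.natDegree ≤ k := by
    rw [hP]
    apply Polynomial.natDegree_sum_le_of_forall_le
    intro l _
    refine (Polynomial.natDegree_C_mul_le _ _).trans ?_
    rw [Polynomial.natDegree_X_pow]
    exact l.2
  have hP0 : P = 0 := by
    apply Polynomial.eq_zero_of_natDegree_lt_card_of_eval_eq_zero P hlaminj hz
    rw [Fintype.card_fin]
    omega
  apply hv
  funext l
  have hco : P.coeff ((l : ℕ) + 1) = v l := by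
    rw [hP, Polynomial.finset_sum_coeff]
    simp [Polynomial.coeff_C_mul, Polynomial.coeff_X_pow, Nat.add_right_cancel_iff,
      Fin.val_inj]
  rw [hP0, Polynomial.coeff_zero] at hco
  exact hco.symm

lemma Qhat_normal {n k : ℕ} (w lam : Fin n → ℝ) (hw : ∀ i, 0 < w i) (hpos : ∀ i, 0 < lam i)
    (hn : 0 < n)
    (Qh : Polynomial ℝ)
    (hmin : ∀ Q : Polynomial ℝ, Q.natDegree ≤ k → Q.eval 0 = 1 →
      ∑ i, w i * (Qh.eval (lam i))^2 ≤ ∑ i, w i * (Q.eval (lam i))^2)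
    (hdeg : Qh.natDegree ≤ k) (h0 : Qh.eval 0 = 1)
    (m : ℕ) (hm1 : 1 ≤ m) (hmk : m ≤ k) :
    ∑ i, w i * lam i ^ m * Qh.eval (lam i) = 0 := by
  classical
  have : Nonempty (Fin n) := ⟨⟨0, hn⟩⟩
  set B := ∑ i, w i * lam i ^ m * Qh.eval (lam i) with hB
  set Cm := ∑ i, w i * (lam i ^ m)^2 with hCm
  have hC : 0 < Cm := by
    apply Finset.sum_pos
    · intro i _
      exact mul_pos (hw i) (pow_pos (pow_pos (hpos i) m) 2)
    · exact Finset.univ_nonempty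
  have hineq : ∀ t : ℝ, 0 ≤ 2*t*B + t^2*Cm := by
    intro t
    have hdeg2 : (Qh + Polynomial.C t * Polynomial.X ^ m).natDegree ≤ k := by
      refine (Polynomial.natDegree_add_le _ _).trans (max_le hdeg ?_)
      refine (Polynomial.natDegree_C_mul_le _ _).trans ?_
      rw [Polynomial.natDegree_X_pow]
      exact hmk
    have heval2 : (Qh + Polynomial.C t * Polynomial.X ^ m).eval 0 = 1 := by
      simp [h0, zero_pow (by omega : m ≠ 0)]
    have hQ := hmin _ hdeg2 heval2
    have h1 : ∀ i : Fin n, w i * ((Qh + Polynomial.C t * Polynomial.X ^ m).eval (lam i))^2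
        = w i * (Qh.eval (lam i))^2 + (2*t*(w i * lam i ^ m * Qh.eval (lam i))
            + t^2*(w i * (lam i ^ m)^2)) := by
      intro i
      simp only [Polynomial.eval_add, Polynomial.eval_mul, Polynomial.eval_C,
        Polynomial.eval_pow, Polynomial.eval_X]
      ring
    rw [Finset.sum_congr rfl fun i _ => h1 i, Finset.sum_add_distrib,
      Finset.sum_add_distrib, ← Finset.mul_sum, ← Finset.mul_sum, ← hB, ← hCm] at hQ
    linarith
  have h' := hineq (-B/Cm)
  have heq : 2*(-B/Cm)*B + (-B/Cm)^2*Cm = -(B^2/Cm) := by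
    field_simp
    ring
  rw [heq] at h'
  have hB2 : B^2 ≤ 0 := by
    have h2 : 0 ≤ -(B^2) := by
      have := mul_nonneg h' hC.le
      rwa [← neg_div, div_mul_cancel₀ _ hC.ne'] at this
    linarith
  have := sq_nonneg B
  have hBz : B^2 = 0 := le_antisymm hB2 this
  exact pow_eq_zero_iff (two_ne_zero) |>.mp hBz
lemma QstarTerm_vanish {n k : ℕ} (w lam : Fin n → ℝ) (hlaminj : Function.Injective lam)
    {j : Fin k → Fin n} (h : ¬ Function.Injective j) :
    vand (fun l => lam (j l)) = 0 := by
  apply vand_eq_zero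
  intro hc
  exact h fun a b hab => hc (by simp [hab])

lemma Qstar_eval_lam {n k : ℕ} (w lam : Fin n → ℝ) (hlaminj : Function.Injective lam) (i : Fin n) :
    (∑ j ∈ Finset.univ.filter
        (fun j : Fin k → Fin n => Function.Injective j ∧ ∀ l, j l ≠ i),
        (∏ l, w (j l)) * vand (Fin.snoc (fun l => lam (j l)) (lam i)) *
          ∏ l, lam (j l) ^ ((l : ℕ) + 1))
      = (Qstar k w lam).eval (lam i) := by
  classical
  rw [Qstar_eval]
  calc (∑ j ∈ Finset.univ.filter
        (fun j : Fin k → Fin n => Function.Injective j ∧ ∀ l, j l ≠ i),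
        (∏ l, w (j l)) * vand (Fin.snoc (fun l => lam (j l)) (lam i)) *
          ∏ l, lam (j l) ^ ((l : ℕ) + 1))
      = ∑ j ∈ Finset.univ.filter
          (fun j : Fin k → Fin n => Function.Injective j ∧ ∀ l, j l ≠ i),
          (∏ l, w (j l) * lam (j l) ^ ((l : ℕ) + 1)) * vand (fun l => lam (j l)) *
            ∏ l, (lam i - lam (j l)) := by
        apply Finset.sum_congr rfl
        intro j _
        rw [vand_snoc, Finset.prod_mul_distrib]
        ring
    _ = ∑ j : Fin k → Fin n,
          (∏ l, w (j l) * lam (j l) ^ ((l : ℕ) + 1)) * vand (fun l => lam (j l)) *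
            ∏ l, (lam i - lam (j l)) := by
        apply Finset.sum_filter_of_ne
        intro j _ hne
        constructor
        · by_contra hinj
          exact hne (by rw [QstarTerm_vanish w lam hlaminj hinj]; ring)
        · intro l
          by_contra hli
          apply hne
          have : (∏ l', (lam i - lam (j l'))) = 0 :=
            Finset.prod_eq_zero (Finset.mem_univ l) (by rw [hli, sub_self])
          rw [this, mul_zero]

lemma Qstar_eval_zero {n k : ℕ} (w lam : Fin n → ℝ) (hlaminj : Function.Injective lam) :
    (Qstar k w lam).eval 0
      = (-1 : ℝ) ^ k * ∑ j ∈ Finset.univ.filter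
          (fun j : Fin k → Fin n => Function.Injective j),
          (∏ l, w (j l)) * vand (fun l => lam (j l)) * ∏ l, lam (j l) ^ ((l : ℕ) + 2) := by
  classical
  rw [Qstar_eval]
  rw [Finset.mul_sum]
  rw [← Finset.sum_filter_of_ne (p := fun j : Fin k → Fin n => Function.Injective j)
    (by
      intro j _ hne
      by_contra hinj
      apply hne
      rw [QstarTerm_vanish w lam hlaminj hinj]
      ring)]
  apply Finset.sum_congr rfl
  intro j _
  have h1 : (∏ l, ((0:ℝ) - lam (j l))) = (-1:ℝ)^k * ∏ l, lam (j l) := by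
    have h : ∀ l : Fin k, (0:ℝ) - lam (j l) = (-1) * lam (j l) := fun l => by ring
    rw [Finset.prod_congr rfl fun l _ => h l, Finset.prod_mul_distrib, Finset.prod_const,
      Finset.card_univ, Fintype.card_fin]
  have h2 : (∏ l, lam (j l) ^ ((l : ℕ) + 1)) * ∏ l, lam (j l)
      = ∏ l, lam (j l) ^ ((l : ℕ) + 2) := by
    rw [← Finset.prod_mul_distrib]
    exact Finset.prod_congr rfl fun l _ => (pow_succ _ _).symm
  rw [Finset.prod_mul_distrib, h1, ← h2]
  ring

lemma eval_eq_of_normal {n k : ℕ} (w lam : Fin n → ℝ) (hw : ∀ i, 0 < w i)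
    (P1 P2 : Polynomial ℝ) (hd1 : P1.natDegree ≤ k) (hd2 : P2.natDegree ≤ k)
    (h00 : P1.eval 0 = P2.eval 0)
    (hN1 : ∀ m, 1 ≤ m → m ≤ k → ∑ i, w i * lam i ^ m * P1.eval (lam i) = 0)
    (hN2 : ∀ m, 1 ≤ m → m ≤ k → ∑ i, w i * lam i ^ m * P2.eval (lam i) = 0)
    (i : Fin n) : P1.eval (lam i) = P2.eval (lam i) := by
  classical
  set Qd : Polynomial ℝ := P1 - P2 with hQd
  have hdd : Qd.natDegree ≤ k := (Polynomial.natDegree_sub_le _ _).trans (max_le hd1 hd2)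
  have hc0 : Qd.coeff 0 = 0 := by
    rw [Polynomial.coeff_zero_eq_eval_zero, hQd, Polynomial.eval_sub, h00, sub_self]
  have key : ∀ S : Fin n → ℝ, (∀ m, 1 ≤ m → m ≤ k → ∑ i', w i' * lam i' ^ m * S i' = 0) →
      ∑ i', w i' * Qd.eval (lam i') * S i' = 0 := by
    intro S hS
    have hev : ∀ x : ℝ, Qd.eval x = ∑ m ∈ Finset.range (k+1), Qd.coeff m * x ^ m := by
      intro x
      exact Polynomial.eval_eq_sum_range' (lt_of_le_of_lt hdd (Nat.lt_succ_self k)) x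
    calc ∑ i', w i' * Qd.eval (lam i') * S i'
        = ∑ i', ∑ m ∈ Finset.range (k+1), Qd.coeff m * (w i' * lam i' ^ m * S i') := by
          apply Finset.sum_congr rfl
          intro i' _
          rw [hev, Finset.mul_sum, Finset.sum_mul]
          apply Finset.sum_congr rfl
          intro m _
          ring
      _ = ∑ m ∈ Finset.range (k+1), Qd.coeff m * ∑ i', w i' * lam i' ^ m * S i' := by
          rw [Finset.sum_comm]
          exact Finset.sum_congr rfl fun m _ => (Finset.mul_sum _ _ _).symm
      _ = 0 := by
          apply Finset.sum_eq_zero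
          intro m hm
          rcases Nat.eq_zero_or_pos m with h | h
          · rw [h, hc0, zero_mul]
          · rw [hS m h (by have := Finset.mem_range.mp hm; omega), mul_zero]
  have h1 := key (fun i' => P1.eval (lam i')) hN1
  have h2 := key (fun i' => P2.eval (lam i')) hN2
  have h3 : ∑ i', w i' * (Qd.eval (lam i'))^2 = 0 := by
    have hterm : ∀ i' : Fin n, w i' * (Qd.eval (lam i'))^2
        = w i' * Qd.eval (lam i') * P1.eval (lam i')
          - w i' * Qd.eval (lam i') * P2.eval (lam i') := by
      intro i'
      have hsub : Qd.eval (lam i') = P1.eval (lam i') - P2.eval (lam i') := by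
        rw [hQd, Polynomial.eval_sub]
      rw [hsub]; ring
    rw [Finset.sum_congr rfl fun i' _ => hterm i', Finset.sum_sub_distrib, h1, h2, sub_zero]
  have hz : Qd.eval (lam i) = 0 := by
    have hnn : ∀ i' ∈ Finset.univ, 0 ≤ w i' * (Qd.eval (lam i'))^2 :=
      fun i' _ => mul_nonneg (hw i').le (sq_nonneg _)
    have := (Finset.sum_eq_zero_iff_of_nonneg hnn).mp h3 i (Finset.mem_univ i)
    rcases mul_eq_zero.mp this with h | h
    · exact absurd h (hw i).ne'
    · exact pow_eq_zero_iff two_ne_zero |>.mp h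
  have hfin : P1.eval (lam i) - P2.eval (lam i) = 0 := by
    rw [← Polynomial.eval_sub]; exact hz
  linarith

open Classical in
/-- explicit formula for Q̂_k(λ_i) as quotient of sums over tuples of
pairwise distinct indices, with Vandermonde determinants. -/
theorem stmt4 {n p : ℕ} (X : Matrix (Fin n) (Fin p) ℝ) (Y : Fin n → ℝ)
    (lam : Fin n → ℝ) (u : Fin n → Fin n → ℝ)
    (hortho : ∀ i j, u i ⬝ᵥ u j = if i = j then (1 : ℝ) else 0)
    (hspec : X * Xᵀ = ∑ i, lam i • vecMulVec (u i) (u i))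
    (hanti : StrictAnti lam) (hpos : ∀ i, 0 < lam i)
    (hphat : ∀ i, u i ⬝ᵥ Y ≠ 0)
    (Qhat : ℕ → Polynomial ℝ)
    (hQmem : ∀ k, 1 ≤ k → k < n → (Qhat k).natDegree ≤ k ∧ (Qhat k).eval 0 = 1)
    (hQmin : ∀ k, 1 ≤ k → k < n → ∀ Q : Polynomial ℝ, Q.natDegree ≤ k → Q.eval 0 = 1 →
      ∑ i, (((Polynomial.aeval (X * Xᵀ)) (Qhat k) *ᵥ Y) i) ^ 2 ≤
        ∑ i, (((Polynomial.aeval (X * Xᵀ)) Q *ᵥ Y) i) ^ 2)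
    (k : ℕ) (hk1 : 1 ≤ k) (hkn : k < n) (i : Fin n) :
    (Qhat k).eval (lam i) =
      (-1 : ℝ) ^ k *
        (∑ j ∈ Finset.univ.filter
            (fun j : Fin k → Fin n => Function.Injective j ∧ ∀ l, j l ≠ i),
            (∏ l, (u (j l) ⬝ᵥ Y) ^ 2) * vand (Fin.snoc (fun l => lam (j l)) (lam i)) *
              ∏ l, lam (j l) ^ ((l : ℕ) + 1)) /
        (∑ j ∈ Finset.univ.filter (fun j : Fin k → Fin n => Function.Injective j),
            (∏ l, (u (j l) ⬝ᵥ Y) ^ 2) * vand (fun l => lam (j l)) *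
              ∏ l, lam (j l) ^ ((l : ℕ) + 2)) := by
  classical
  have hw : ∀ i', (0:ℝ) < (fun i' => (u i' ⬝ᵥ Y) ^ 2) i' :=
    fun i' => pow_two_pos_of_ne_zero (hphat i')
  have hlaminj : Function.Injective lam := hanti.injective
  obtain ⟨hdeg, h0⟩ := hQmem k hk1 hkn
  set w : Fin n → ℝ := fun i' => (u i' ⬝ᵥ Y) ^ 2 with hw_def
  -- minimality in weighted form
  have hmin : ∀ Q : Polynomial ℝ, Q.natDegree ≤ k → Q.eval 0 = 1 →
      ∑ i', w i' * ((Qhat k).eval (lam i'))^2 ≤ ∑ i', w i' * (Q.eval (lam i'))^2 := by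
    intro Q hQd hQ0
    have h := hQmin k hk1 hkn Q hQd hQ0
    rwa [phi_eq X Y lam u hortho hspec, phi_eq X Y lam u hortho hspec] at h
  -- normal equations for Qhat
  have hN1 : ∀ m, 1 ≤ m → m ≤ k →
      ∑ i', w i' * lam i' ^ m * (Qhat k).eval (lam i') = 0 :=
    fun m h1 h2 => Qhat_normal w lam hw hpos (by omega) (Qhat k) hmin hdeg h0 m h1 h2
  -- the explicit polynomial
  set e0 : ℝ := (Qstar k w lam).eval 0 with he0
  -- denominator is nonzero
  have hden : (∑ j ∈ Finset.univ.filter (fun j : Fin k → Fin n => Function.Injective j),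
      (∏ l, w (j l)) * vand (fun l => lam (j l)) * ∏ l, lam (j l) ^ ((l : ℕ) + 2)) ≠ 0 := by
    rw [denom_eq_det w lam hlaminj]
    exact det_moment_ne_zero w lam hw hlaminj hkn
  have hsgn : ((-1 : ℝ) ^ k) ≠ 0 := by positivity
  have he0z : e0 ≠ 0 := by
    rw [he0, Qstar_eval_zero w lam hlaminj]
    exact mul_ne_zero hsgn hden
  -- the normalized explicit polynomial
  set P2 : Polynomial ℝ := Polynomial.C e0⁻¹ * Qstar k w lam with hP2
  have hd2 : P2.natDegree ≤ k :=
    (Polynomial.natDegree_C_mul_le _ _).trans (Qstar_natDegree_le k w lam)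
  have h002 : P2.eval 0 = 1 := by
    rw [hP2, Polynomial.eval_mul, Polynomial.eval_C, ← he0, inv_mul_cancel₀ he0z]
  have hN2 : ∀ m, 1 ≤ m → m ≤ k →
      ∑ i', w i' * lam i' ^ m * P2.eval (lam i') = 0 := by
    intro m h1 h2
    have := Qstar_normal w lam m h1 h2
    calc ∑ i', w i' * lam i' ^ m * P2.eval (lam i')
        = e0⁻¹ * ∑ i', w i' * lam i' ^ m * (Qstar k w lam).eval (lam i') := by
          rw [Finset.mul_sum]
          apply Finset.sum_congr rfl
          intro i' _
          rw [hP2, Polynomial.eval_mul, Polynomial.eval_C]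
          ring
      _ = 0 := by rw [this, mul_zero]
  -- values agree
  have hvals := eval_eq_of_normal w lam hw (Qhat k) P2 hdeg hd2 (by rw [h0, h002]) hN1 hN2 i
  have hP2v : P2.eval (lam i) = e0⁻¹ * (Qstar k w lam).eval (lam i) := by
    rw [hP2, Polynomial.eval_mul, Polynomial.eval_C]
  -- rewrite numerator and denominator of the goal
  rw [hvals, hP2v]
  rw [show (∑ j ∈ Finset.univ.filter
        (fun j : Fin k → Fin n => Function.Injective j ∧ ∀ l, j l ≠ i),
        (∏ l, (u (j l) ⬝ᵥ Y) ^ 2) * vand (Fin.snoc (fun l => lam (j l)) (lam i)) *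
          ∏ l, lam (j l) ^ ((l : ℕ) + 1)) = (Qstar k w lam).eval (lam i) from
    Qstar_eval_lam w lam hlaminj i]
  rw [show (∑ j ∈ Finset.univ.filter (fun j : Fin k → Fin n => Function.Injective j),
        (∏ l, (u (j l) ⬝ᵥ Y) ^ 2) * vand (fun l => lam (j l)) *
          ∏ l, lam (j l) ^ ((l : ℕ) + 2)) = (-1:ℝ)^k * e0 by
    rw [he0, Qstar_eval_zero w lam hlaminj, ← mul_assoc, ← pow_add, ← two_mul, pow_mul]
    norm_num; rfl]
  rw [mul_div_mul_left _ _ hsgn, div_eq_inv_mul]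
end

section
/- For every 1 ≤ k < n and every 1 ≤ i ≤ n, the minimizing residual polynomial satisfies Q̂_k(λ_i) = Σ_{(j_1,…,j_k)∈I_k^+} ŵ_{j_1,…,j_k} · ∏_{l=1}^k (1 − λ_i/λ_{j_l}); in particular the weights ŵ_{j_1,…,j_k} are nonnegative and sum to one over I_k^+. -/
open Matrix Polynomial Finset

/-! ### Auxiliary machinery -/

/-- Symmetric product over all ordered pairs of a finset. -/
def Wd {n : ℕ} (lam : Fin n → ℝ) (A : Finset (Fin n)) : ℝ :=
  ∏ p ∈ A.offDiag, (lam p.2 - lam p.1)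

lemma Wd_insert {n : ℕ} (lam : Fin n → ℝ) {A : Finset (Fin n)} {i : Fin n} (hi : i ∉ A) :
    Wd lam (insert i A) = Wd lam A * ∏ a ∈ A, ((lam a - lam i) * (lam i - lam a)) := by
  unfold Wd
  rw [Finset.offDiag_insert (s := A) (a := i) hi]
  have d1 : Disjoint (A.offDiag) ({i} ×ˢ A) := by
    rw [disjoint_left]; rintro ⟨x, y⟩ hp hq
    rw [mem_offDiag] at hp
    rw [mem_product, mem_singleton] at hq
    exact hi (hq.1 ▸ hp.1)
  have d2 : Disjoint (A.offDiag ∪ {i} ×ˢ A) (A ×ˢ {i}) := by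
    rw [disjoint_left]; rintro ⟨x, y⟩ hp hq
    rw [mem_product, mem_singleton] at hq
    rcases mem_union.mp hp with h | h
    · rw [mem_offDiag] at h; exact hi (hq.2 ▸ h.2.1)
    · rw [mem_product, mem_singleton] at h; exact hi (hq.2 ▸ h.2)
  rw [prod_union d2, prod_union d1]
  have e1 : ∏ p ∈ {i} ×ˢ A, (lam p.2 - lam p.1) = ∏ a ∈ A, (lam a - lam i) := by
    rw [Finset.singleton_product, prod_map]; rfl
  have e2 : ∏ p ∈ A ×ˢ {i}, (lam p.2 - lam p.1) = ∏ a ∈ A, (lam i - lam a) := by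
    rw [Finset.product_singleton, prod_map]; rfl
  rw [e1, e2, prod_mul_distrib]; ring

lemma basis_coeff {F : Type*} [Field F] {ι : Type*} [DecidableEq ι]
    (s : Finset ι) (v : ι → F) (i : ι) (hi : i ∈ s) :
    (Lagrange.basis s v i).coeff (s.card - 1) = Lagrange.nodalWeight s v i := by
  have h1 : Lagrange.basis s v i
      = C (Lagrange.nodalWeight s v i) * Lagrange.nodal (s.erase i) v := by
    rw [Lagrange.basis_eq_prod_sub_inv_mul_nodal_div hi,
      Lagrange.nodal_erase_eq_nodal_div hi]
  rw [h1, coeff_C_mul]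
  have h2 : (Lagrange.nodal (s.erase i) v).natDegree = s.card - 1 := by
    rw [Lagrange.natDegree_nodal, card_erase_of_mem hi]
  have h3 : (Lagrange.nodal (s.erase i) v).coeff (s.card - 1) = 1 := by
    rw [← h2]
    exact Lagrange.nodal_monic.coeff_natDegree
  rw [h3, mul_one]

lemma lagrange_key {F : Type*} [Field F] {ι : Type*} [DecidableEq ι]
    (s : Finset ι) (v : ι → F) (hinj : Set.InjOn v s) (d : ℕ) (hd : d + 1 < s.card) :
    ∑ i ∈ s, v i ^ d * Lagrange.nodalWeight s v i = 0 := by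
  have hX : (X : F[X]) ^ d = Lagrange.interpolate s v (fun i => v i ^ d) := by
    apply Lagrange.eq_interpolate_of_eval_eq _ hinj
    · rw [degree_X_pow]
      exact_mod_cast lt_trans (by exact_mod_cast Nat.lt_succ_self d) hd
    · intro i _; simp
  have := congrArg (fun P => P.coeff (s.card - 1)) hX
  simp only [Lagrange.interpolate_apply, finset_sum_coeff, coeff_C_mul, coeff_X_pow] at this
  rw [if_neg (by omega)] at this
  have h4 : ∑ i ∈ s, v i ^ d * Lagrange.nodalWeight s v i
      = ∑ i ∈ s, v i ^ d * (Lagrange.basis s v i).coeff (s.card - 1) :=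
    sum_congr rfl fun i hi => by rw [basis_coeff s v i hi]
  rw [h4]; exact this.symm

lemma keyB {n : ℕ} (lam : Fin n → ℝ) (hinj : Function.Injective lam)
    (B : Finset (Fin n)) (d : ℕ) (hd : d + 1 < B.card) :
    ∑ i ∈ B, lam i ^ d * (Wd lam (B.erase i) * ∏ a ∈ B.erase i, (lam a - lam i)) = 0 := by
  have key := lagrange_key B lam (hinj.injOn) d hd
  have hterm : ∀ i ∈ B, lam i ^ d * (Wd lam (B.erase i) * ∏ a ∈ B.erase i, (lam a - lam i))
      = Wd lam B * (lam i ^ d * Lagrange.nodalWeight B lam i) := by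
    intro i hi
    have hWB : Wd lam B
        = Wd lam (B.erase i) * ∏ a ∈ B.erase i, ((lam a - lam i) * (lam i - lam a)) := by
      conv_lhs => rw [← insert_erase hi]
      exact Wd_insert lam (notMem_erase i B)
    have hq : ∀ a ∈ B.erase i, lam i - lam a ≠ 0 := by
      intro a ha
      have : a ≠ i := (mem_erase.mp ha).1
      exact sub_ne_zero_of_ne fun h => this (hinj h).symm
    have h1 : Lagrange.nodalWeight B lam i = ∏ a ∈ B.erase i, (lam i - lam a)⁻¹ := rfl
    rw [hWB, h1, prod_mul_distrib]
    rw [mul_comm (∏ a ∈ B.erase i, (lam a - lam i)) (∏ a ∈ B.erase i, (lam i - lam a))]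
    have hne : (∏ a ∈ B.erase i, (lam i - lam a)) ≠ 0 := prod_ne_zero_iff.mpr hq
    field_simp
    simp only [one_div]
    rw [Finset.prod_inv_distrib, mul_inv_cancel_right₀ hne]
  rw [sum_congr rfl hterm, ← mul_sum, key, mul_zero]

/-- The determinantal weight attached to a subset. -/
def DF {n : ℕ} (phat lam : Fin n → ℝ) (A : Finset (Fin n)) : ℝ :=
  (∏ a ∈ A, phat a ^ 2 * lam a ^ 2) * Wd lam A

lemma ortho {n k : ℕ} (phat lam : Fin n → ℝ) (hinj : Function.Injective lam)
    (hlam0 : ∀ i, lam i ≠ 0) (m : ℕ) (hm1 : 1 ≤ m) (hmk : m ≤ k) :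
    ∑ A ∈ Finset.powersetCard k (univ : Finset (Fin n)),
      ∑ i, DF phat lam A * (phat i ^ 2 * lam i ^ m * ∏ a ∈ A, (1 - lam i / lam a)) = 0 := by
  classical
  set f : Finset (Fin n) → Fin n → ℝ := fun A i =>
    DF phat lam A * (phat i ^ 2 * lam i ^ m * ∏ a ∈ A, (1 - lam i / lam a)) with hf
  have step1 : ∀ A ∈ Finset.powersetCard k (univ : Finset (Fin n)),
      ∑ i, f A i = ∑ i ∈ univ \ A, f A i := by
    intro A _
    symm
    apply Finset.sum_subset (Finset.sdiff_subset)
    intro i _ hns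
    have hiA : i ∈ A := by simpa using hns
    have hz : ∏ a ∈ A, (1 - lam i / lam a) = 0 :=
      prod_eq_zero hiA (by rw [div_self (hlam0 i), sub_self])
    simp [hf, hz]
  rw [Finset.sum_congr rfl step1]
  have step2 : ∑ A ∈ Finset.powersetCard k (univ : Finset (Fin n)), ∑ i ∈ univ \ A, f A i
      = ∑ B ∈ Finset.powersetCard (k+1) (univ : Finset (Fin n)), ∑ i ∈ B, f (B.erase i) i := by
    rw [Finset.sum_sigma' (Finset.powersetCard k (univ : Finset (Fin n)))
        (fun A => univ \ A) (fun A i => f A i),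
      Finset.sum_sigma' (Finset.powersetCard (k+1) (univ : Finset (Fin n)))
        (fun B => B) (fun B i => f (B.erase i) i)]
    apply Finset.sum_bij' (i := fun p _ => (⟨insert p.2 p.1, p.2⟩ : Σ _ : Finset (Fin n), Fin n))
      (j := fun p _ => (⟨p.1.erase p.2, p.2⟩ : Σ _ : Finset (Fin n), Fin n))
    · rintro ⟨A, i⟩ hp
      simp only [Finset.mem_sigma, Finset.mem_powersetCard, Finset.mem_sdiff] at hp ⊢
      refine ⟨⟨Finset.subset_univ _, ?_⟩, Finset.mem_insert_self _ _⟩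
      rw [Finset.card_insert_of_notMem hp.2.2, hp.1.2]
    · rintro ⟨B, i⟩ hp
      simp only [Finset.mem_sigma, Finset.mem_powersetCard, Finset.mem_sdiff] at hp ⊢
      exact ⟨⟨Finset.subset_univ _, by rw [Finset.card_erase_of_mem hp.2, hp.1.2]; omega⟩,
        Finset.mem_univ _, Finset.notMem_erase _ _⟩
    · rintro ⟨A, i⟩ hp
      simp only [Finset.mem_sigma, Finset.mem_powersetCard, Finset.mem_sdiff] at hp
      simp [Finset.erase_insert hp.2.2]
    · rintro ⟨B, i⟩ hp
      simp only [Finset.mem_sigma] at hp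
      simp [Finset.insert_erase hp.2]
    · rintro ⟨A, i⟩ hp
      simp only [Finset.mem_sigma, Finset.mem_powersetCard, Finset.mem_sdiff] at hp
      simp [Finset.erase_insert hp.2.2]
  rw [step2]
  apply Finset.sum_eq_zero
  intro B hB
  rw [Finset.mem_powersetCard] at hB
  have hcard : B.card = k + 1 := hB.2
  have key := keyB lam hinj B (m - 1) (by omega)
  obtain ⟨m', rfl⟩ : ∃ m', m = m' + 1 := ⟨m - 1, by omega⟩
  simp only [Nat.add_sub_cancel] at key
  have hterm : ∀ i ∈ B, f (B.erase i) i
      = ((∏ a ∈ B, phat a ^ 2) * ∏ a ∈ B, lam a)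
        * (lam i ^ m' * (Wd lam (B.erase i) * ∏ a ∈ B.erase i, (lam a - lam i))) := by
    intro i hi
    have h1 : ∏ a ∈ B.erase i, (1 - lam i / lam a)
        = (∏ a ∈ B.erase i, (lam a - lam i)) * (∏ a ∈ B.erase i, lam a)⁻¹ := by
      rw [← Finset.prod_inv_distrib, ← Finset.prod_mul_distrib]
      refine Finset.prod_congr rfl fun a _ => ?_
      field_simp [hlam0 a]
    have h2 : ∏ a ∈ B.erase i, phat a ^ 2 * lam a ^ 2
        = (∏ a ∈ B.erase i, phat a ^ 2) * (∏ a ∈ B.erase i, lam a) ^ 2 := by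
      simp [Finset.prod_mul_distrib, Finset.prod_pow]
    have h3 : (∏ a ∈ B.erase i, phat a ^ 2) * phat i ^ 2 = ∏ a ∈ B, phat a ^ 2 :=
      Finset.prod_erase_mul _ _ hi
    have h4 : (∏ a ∈ B.erase i, lam a) * lam i = ∏ a ∈ B, lam a :=
      Finset.prod_erase_mul _ _ hi
    have h5 : lam i ^ (m' + 1) = lam i ^ m' * lam i := pow_succ _ _
    have hEne : (∏ a ∈ B.erase i, lam a) ≠ 0 := Finset.prod_ne_zero_iff.mpr fun a _ => hlam0 a
    rw [hf]
    simp only [DF]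
    rw [h1, h2, h5, ← h3, ← h4]
    field_simp
  rw [Finset.sum_congr rfl hterm, ← Finset.mul_sum, key, mul_zero]

lemma mulVec_vecsum {n : ℕ} {κ : Type*} (s : Finset κ) (M : Matrix (Fin n) (Fin n) ℝ)
    (v : κ → Fin n → ℝ) : M *ᵥ (∑ e ∈ s, v e) = ∑ e ∈ s, M *ᵥ v e := by
  induction s using Finset.cons_induction with
  | empty => simp [Matrix.mulVec, dotProduct]
  | cons a s ha ih => rw [Finset.sum_cons, Finset.sum_cons, Matrix.mulVec_add, ih]

lemma matsum_mulVec {n : ℕ} {κ : Type*} (s : Finset κ) (M : κ → Matrix (Fin n) (Fin n) ℝ)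
    (v : Fin n → ℝ) : (∑ e ∈ s, M e) *ᵥ v = ∑ e ∈ s, M e *ᵥ v := by
  induction s using Finset.cons_induction with
  | empty => simp [Matrix.mulVec]
  | cons a s ha ih => rw [Finset.sum_cons, Finset.sum_cons, Matrix.add_mulVec, ih]

lemma obj_eq {n : ℕ} (A : Matrix (Fin n) (Fin n) ℝ) (lam : Fin n → ℝ)
    (u : Fin n → Fin n → ℝ) (Y : Fin n → ℝ)
    (hortho : ∀ i j, u i ⬝ᵥ u j = if i = j then (1 : ℝ) else 0)
    (hA : A = ∑ i, lam i • vecMulVec (u i) (u i)) (Q : Polynomial ℝ) :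
    ∑ m, ((Polynomial.aeval A Q *ᵥ Y) m) ^ 2
      = ∑ i, (u i ⬝ᵥ Y) ^ 2 * (Q.eval (lam i)) ^ 2 := by
  classical
  set U : Matrix (Fin n) (Fin n) ℝ := Matrix.of u with hUdef
  have hUU : U * Uᵀ = 1 := by
    ext i j
    simp only [Matrix.mul_apply, Matrix.one_apply, Matrix.transpose_apply]
    simpa [dotProduct, U] using hortho i j
  have hUtU : Uᵀ * U = 1 := mul_eq_one_comm.mp hUU
  have hAu : ∀ j, A *ᵥ u j = lam j • u j := by
    intro j
    funext m
    rw [hA]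
    have h1 : ((∑ i, lam i • vecMulVec (u i) (u i)) *ᵥ u j) m
        = ∑ i, ∑ t, lam i * (u i m * u i t) * u j t := by
      rw [matsum_mulVec]
      simp only [Finset.sum_apply]
      refine Finset.sum_congr rfl fun i _ => ?_
      simp [Matrix.mulVec, dotProduct, Matrix.smul_apply, Matrix.vecMulVec_apply,
        smul_eq_mul, Finset.mul_sum, mul_assoc]
    rw [h1]
    have h2 : ∀ i, ∑ t, lam i * (u i m * u i t) * u j t
        = lam i * u i m * (u i ⬝ᵥ u j) := by
      intro i; rw [dotProduct, Finset.mul_sum]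
      exact Finset.sum_congr rfl fun t _ => by ring
    simp_rw [h2, hortho]
    simp [mul_ite]
  have hpow : ∀ (s : ℕ) (j : Fin n), (A ^ s) *ᵥ u j = lam j ^ s • u j := by
    intro s
    induction s with
    | zero => intro j; simp [Matrix.one_mulVec]
    | succ s ih =>
      intro j
      rw [pow_succ, ← Matrix.mulVec_mulVec, hAu j, Matrix.mulVec_smul, ih j,
        smul_smul, pow_succ]
      ring_nf
  have hQu : ∀ j, (Polynomial.aeval A Q) *ᵥ u j = Q.eval (lam j) • u j := by
    intro j
    rw [Polynomial.aeval_eq_sum_range, matsum_mulVec]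
    have h3 : ∀ e, (Q.coeff e • A ^ e) *ᵥ u j = (Q.coeff e * lam j ^ e) • u j := by
      intro e
      rw [Matrix.smul_mulVec, hpow e j, smul_smul]
    simp_rw [h3]
    rw [← Finset.sum_smul, Polynomial.eval_eq_sum_range]
  have hYexp : Y = ∑ i, (u i ⬝ᵥ Y) • u i := by
    funext m
    have h4 : Y m = ((Uᵀ * U) *ᵥ Y) m := by rw [hUtU, Matrix.one_mulVec]
    rw [h4, ← Matrix.mulVec_mulVec]
    simp only [Matrix.mulVec, dotProduct, Matrix.transpose_apply, Finset.sum_apply,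
      Pi.smul_apply, smul_eq_mul, U, Matrix.of_apply]
    exact Finset.sum_congr rfl fun i _ => by ring
  have hmain : Polynomial.aeval A Q *ᵥ Y = ∑ i, ((u i ⬝ᵥ Y) * Q.eval (lam i)) • u i := by
    conv_lhs => rw [hYexp]
    have h5 : Polynomial.aeval A Q *ᵥ (∑ i, (u i ⬝ᵥ Y) • u i)
        = ∑ i, Polynomial.aeval A Q *ᵥ ((u i ⬝ᵥ Y) • u i) :=
      mulVec_vecsum _ _ _
    rw [h5]
    refine Finset.sum_congr rfl fun i _ => ?_
    rw [Matrix.mulVec_smul, hQu i, smul_smul]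
  set c : Fin n → ℝ := fun i => (u i ⬝ᵥ Y) * Q.eval (lam i) with hc
  have hvec : Polynomial.aeval A Q *ᵥ Y = Uᵀ *ᵥ c := by
    rw [hmain]
    funext m
    simp only [Matrix.mulVec, dotProduct, Matrix.transpose_apply, Finset.sum_apply,
      Pi.smul_apply, smul_eq_mul, U, Matrix.of_apply]
    refine Finset.sum_congr rfl fun i _ => ?_
    show _ = u i m * c i
    simp only [hc, dotProduct]
    ring
  rw [hvec]
  have h6 : ∑ m, ((Uᵀ *ᵥ c) m) ^ 2 = (Uᵀ *ᵥ c) ⬝ᵥ (Uᵀ *ᵥ c) := by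
    rw [dotProduct]; exact Finset.sum_congr rfl fun m _ => pow_two _
  rw [h6, Matrix.dotProduct_mulVec, Matrix.vecMul_transpose, Matrix.mulVec_mulVec,
    hUU, Matrix.one_mulVec, dotProduct]
  exact Finset.sum_congr rfl fun i _ => by rw [hc]; ring

lemma sum_S_powerset {n k : ℕ}
    [inst : DecidablePred fun j : Fin k → Fin n => StrictAnti j]
    (g : Finset (Fin n) → ℝ) :
    ∑ j ∈ Finset.univ.filter (fun j : Fin k → Fin n => StrictAnti j), g (Finset.image j univ)
      = ∑ A ∈ Finset.powersetCard k (univ : Finset (Fin n)), g A := by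
  classical
  refine Finset.sum_bij' (fun j _ => Finset.image j univ)
    (fun A hA => fun l : Fin k =>
      A.orderEmbOfFin (Finset.mem_powersetCard.mp hA).2 l.rev) ?_ ?_ ?_ ?_ ?_
  · intro j hj
    rw [Finset.mem_filter] at hj
    rw [Finset.mem_powersetCard]
    exact ⟨Finset.subset_univ _, by
      rw [Finset.card_image_of_injective _ hj.2.injective, Finset.card_univ,
        Fintype.card_fin]⟩
  · intro A hA
    rw [Finset.mem_filter]
    refine ⟨Finset.mem_univ _, ?_⟩
    intro a b hab
    exact (A.orderEmbOfFin _).strictMono (by rwa [Fin.rev_lt_rev])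
  · intro j hj
    rw [Finset.mem_filter] at hj
    have hinj := hj.2.injective
    have hcard : (Finset.image j univ).card = k := by
      rw [Finset.card_image_of_injective _ hinj, Finset.card_univ, Fintype.card_fin]
    have hmono : StrictMono (fun l : Fin k => j l.rev) := by
      intro a b hab
      exact hj.2 (Fin.rev_lt_rev.mpr hab)
    have huniq := Finset.orderEmbOfFin_unique
      (f := fun l : Fin k => j l.rev)
      ((Finset.mem_powersetCard.mp ((Finset.mem_powersetCard).mpr
        ⟨Finset.subset_univ _, hcard⟩)).2)
      (fun x => Finset.mem_image_of_mem _ (Finset.mem_univ _)) hmono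
    funext l
    have := congrFun huniq l.rev
    simp only [Fin.rev_rev] at this
    exact this.symm
  · intro A hA
    have h2 := (Finset.mem_powersetCard.mp hA).2
    ext x
    simp only [Finset.mem_image, Finset.mem_univ, true_and]
    constructor
    · rintro ⟨l, rfl⟩; exact Finset.orderEmbOfFin_mem _ _ _
    · intro hx
      have : x ∈ Set.range (A.orderEmbOfFin h2) := by
        rw [Finset.range_orderEmbOfFin]; exact hx
      obtain ⟨l, hl⟩ := this
      exact ⟨l.rev, by simpa [Fin.rev_rev] using hl⟩
  · intro j hj; rfl

lemma vand_eq_prod_filter {k : ℕ} (x : Fin k → ℝ) :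
    vand x = ∏ p ∈ ((univ : Finset (Fin k)) ×ˢ univ).filter (fun p => p.1 < p.2),
      (x p.2 - x p.1) := by
  rw [Finset.prod_filter, Finset.prod_product]
  unfold vand
  rw [Finset.prod_comm]
  exact Finset.prod_congr rfl fun r _ => by rw [Finset.prod_filter]

lemma vand_ne_zero {k : ℕ} (x : Fin k → ℝ) (hinj : Function.Injective x) :
    vand x ≠ 0 := by
  unfold vand
  rw [Finset.prod_ne_zero_iff]
  intro r _
  rw [Finset.prod_ne_zero_iff]
  intro q hq
  rw [Finset.mem_filter] at hq
  exact sub_ne_zero_of_ne fun h => absurd (hinj h.symm) (ne_of_lt hq.2)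

lemma offDiag_prod_eq {k : ℕ} (x : Fin k → ℝ) :
    ∏ p ∈ (univ : Finset (Fin k)).offDiag, (x p.2 - x p.1)
      = (-1 : ℝ) ^ (((univ : Finset (Fin k)) ×ˢ univ).filter (fun p => p.1 < p.2)).card
        * vand x ^ 2 := by
  classical
  set P1 := ((univ : Finset (Fin k)) ×ˢ univ).filter (fun p => p.1 < p.2) with hP1
  set P2 := ((univ : Finset (Fin k)) ×ˢ univ).filter (fun p => p.2 < p.1) with hP2
  have hsplit : (univ : Finset (Fin k)).offDiag = P1 ∪ P2 := by
    ext ⟨a, b⟩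
    simp only [Finset.mem_offDiag, Finset.mem_union, hP1, hP2, Finset.mem_filter,
      Finset.mem_product, Finset.mem_univ, true_and, and_true]
    exact ne_iff_lt_or_gt
  have hdisj : Disjoint P1 P2 := by
    rw [Finset.disjoint_left]
    rintro ⟨a, b⟩ h1 h2
    simp only [hP1, hP2, Finset.mem_filter] at h1 h2
    exact absurd h2.2 (asymm h1.2)
  have hswap : ∏ p ∈ P2, (x p.2 - x p.1) = ∏ p ∈ P1, (x p.1 - x p.2) := by
    refine Finset.prod_bij' (fun p _ => (p.2, p.1)) (fun p _ => (p.2, p.1)) ?_ ?_ ?_ ?_ ?_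
    · rintro ⟨a, b⟩ h; simp only [hP1, hP2, Finset.mem_filter, Finset.mem_product] at h ⊢
      exact ⟨⟨Finset.mem_univ _, Finset.mem_univ _⟩, h.2⟩
    · rintro ⟨a, b⟩ h; simp only [hP1, hP2, Finset.mem_filter, Finset.mem_product] at h ⊢
      exact ⟨⟨Finset.mem_univ _, Finset.mem_univ _⟩, h.2⟩
    · rintro ⟨a, b⟩ _; rfl
    · rintro ⟨a, b⟩ _; rfl
    · rintro ⟨a, b⟩ _; rfl
  have hneg : ∏ p ∈ P1, (x p.1 - x p.2) = (-1 : ℝ) ^ P1.card * ∏ p ∈ P1, (x p.2 - x p.1) := by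
    rw [← Finset.prod_const, ← Finset.prod_mul_distrib]
    exact Finset.prod_congr rfl fun p _ => by ring
  rw [hsplit, Finset.prod_union hdisj, hswap, hneg, ← vand_eq_prod_filter]
  ring

lemma offDiag_prod_image {n k : ℕ} (lam : Fin n → ℝ) (j : Fin k → Fin n)
    (hinj : Function.Injective j) :
    ∏ p ∈ (univ : Finset (Fin k)).offDiag, (lam (j p.2) - lam (j p.1))
      = Wd lam (Finset.image j univ) := by
  classical
  unfold Wd
  refine Finset.prod_bij (fun p _ => (j p.1, j p.2)) ?_ ?_ ?_ ?_
  · rintro ⟨a, b⟩ h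
    rw [Finset.mem_offDiag] at h ⊢
    exact ⟨Finset.mem_image_of_mem _ (Finset.mem_univ _),
      Finset.mem_image_of_mem _ (Finset.mem_univ _), fun hc => h.2.2 (hinj hc)⟩
  · rintro ⟨a, b⟩ ha ⟨c, d⟩ hc h
    simp only [Prod.mk.injEq] at h
    exact Prod.ext (hinj h.1) (hinj h.2)
  · rintro ⟨a, b⟩ h
    rw [Finset.mem_offDiag] at h
    obtain ⟨q, -, rfl⟩ := Finset.mem_image.mp h.1
    obtain ⟨r, -, rfl⟩ := Finset.mem_image.mp h.2.1
    exact ⟨(q, r), Finset.mem_offDiag.mpr ⟨Finset.mem_univ _, Finset.mem_univ _,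
      fun hc => h.2.2 (congrArg j hc)⟩, rfl⟩
  · rintro ⟨a, b⟩ _; rfl

open Classical in
/-- Q̂_k(λ_i) = Σ_{(j_1,…,j_k)∈I_k^+} ŵ_{j_1,…,j_k} ∏_l (1 − λ_i/λ_{j_l}),
where the weights ŵ are nonnegative and sum to one over I_k^+ (the strictly
decreasing k-tuples of indices). -/
theorem stmt5 {n p : ℕ} (X : Matrix (Fin n) (Fin p) ℝ) (Y : Fin n → ℝ)
    (lam : Fin n → ℝ) (u : Fin n → Fin n → ℝ)
    (hortho : ∀ i j, u i ⬝ᵥ u j = if i = j then (1 : ℝ) else 0)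
    (hspec : X * Xᵀ = ∑ i, lam i • vecMulVec (u i) (u i))
    (hanti : StrictAnti lam) (hpos : ∀ i, 0 < lam i)
    (hphat : ∀ i, u i ⬝ᵥ Y ≠ 0)
    (Qhat : ℕ → Polynomial ℝ)
    (hQmem : ∀ k, 1 ≤ k → k < n → (Qhat k).natDegree ≤ k ∧ (Qhat k).eval 0 = 1)
    (hQmin : ∀ k, 1 ≤ k → k < n → ∀ Q : Polynomial ℝ, Q.natDegree ≤ k → Q.eval 0 = 1 →
      ∑ i, (((Polynomial.aeval (X * Xᵀ)) (Qhat k) *ᵥ Y) i) ^ 2 ≤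
        ∑ i, (((Polynomial.aeval (X * Xᵀ)) Q *ᵥ Y) i) ^ 2)
    (k : ℕ) (hk1 : 1 ≤ k) (hkn : k < n) (i : Fin n) :
    let S : Finset (Fin k → Fin n) := Finset.univ.filter (fun j => StrictAnti j)
    let D : (Fin k → Fin n) → ℝ := fun j =>
      (∏ l, (u (j l) ⬝ᵥ Y) ^ 2 * lam (j l) ^ 2) * vand (fun l => lam (j l)) ^ 2
    let w : (Fin k → Fin n) → ℝ := fun j => D j / ∑ j' ∈ S, D j'
    ((Qhat k).eval (lam i) = ∑ j ∈ S, w j * ∏ l, (1 - lam i / lam (j l))) ∧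
      (∀ j ∈ S, 0 ≤ w j) ∧ (∑ j ∈ S, w j = 1) := by
  intro S D w
  have hS : S = Finset.univ.filter (fun j : Fin k → Fin n => StrictAnti j) := rfl
  set phat : Fin n → ℝ := fun i' => u i' ⬝ᵥ Y with hphat_def
  have hlam0 : ∀ i', lam i' ≠ 0 := fun i' => (hpos i').ne'
  have hDval : ∀ j : Fin k → Fin n, D j
      = (∏ l, phat (j l) ^ 2 * lam (j l) ^ 2) * vand (fun l => lam (j l)) ^ 2 :=
    fun j => rfl
  have hDpos : ∀ j ∈ S, 0 < D j := by
    intro j hj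
    rw [hS, Finset.mem_filter] at hj
    have hjinj : Function.Injective j := hj.2.injective
    have h1 : 0 < ∏ l : Fin k, phat (j l) ^ 2 * lam (j l) ^ 2 := by
      apply Finset.prod_pos
      intro l _
      have h := hphat (j l)
      have h' := hlam0 (j l)
      positivity
    have h2 : vand (fun l => lam (j l)) ≠ 0 :=
      vand_ne_zero _ (fun a b hab => hjinj (hanti.injective hab))
    have h2' : 0 < vand (fun l => lam (j l)) ^ 2 := by positivity
    rw [hDval]
    exact mul_pos h1 h2'
  have hSne : S.Nonempty := by
    refine ⟨fun l => ⟨k - 1 - (l : ℕ), by omega⟩, ?_⟩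
    rw [hS, Finset.mem_filter]
    refine ⟨Finset.mem_univ _, fun a b hab => ?_⟩
    have ha := a.isLt
    have hb := b.isLt
    simp only [Fin.lt_def] at hab ⊢
    omega
  have hσpos : 0 < ∑ j' ∈ S, D j' := Finset.sum_pos hDpos hSne
  have hwnn : ∀ j ∈ S, 0 ≤ w j := fun j hj => div_nonneg (hDpos j hj).le hσpos.le
  have hwsum : ∑ j ∈ S, w j = 1 := by
    show ∑ j ∈ S, D j / (∑ j' ∈ S, D j') = 1
    rw [← Finset.sum_div]
    exact div_self hσpos.ne'
  refine ⟨?_, hwnn, hwsum⟩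
  -- the candidate polynomial
  set R : Polynomial ℝ :=
    ∑ j ∈ S, Polynomial.C (w j) *
      ∏ l : Fin k, (1 - Polynomial.C (lam (j l))⁻¹ * Polynomial.X) with hRdef
  have hReval : ∀ x : ℝ, R.eval x = ∑ j ∈ S, w j * ∏ l : Fin k, (1 - x / lam (j l)) := by
    intro x
    rw [hRdef, Polynomial.eval_finset_sum]
    refine Finset.sum_congr rfl fun j _ => ?_
    rw [Polynomial.eval_mul, Polynomial.eval_C, Polynomial.eval_prod]
    congr 1
    refine Finset.prod_congr rfl fun l _ => ?_
    simp [div_eq_inv_mul]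
  have hR0 : R.eval 0 = 1 := by
    rw [hReval]
    simpa using hwsum
  have hRdeg : R.natDegree ≤ k := by
    apply Polynomial.natDegree_sum_le_of_forall_le
    intro j _
    refine le_trans (Polynomial.natDegree_mul_le) ?_
    rw [Polynomial.natDegree_C, zero_add]
    refine le_trans (Polynomial.natDegree_prod_le _ _) ?_
    have hone : ∀ l : Fin k,
        ((1 : Polynomial ℝ) - Polynomial.C (lam (j l))⁻¹ * Polynomial.X).natDegree ≤ 1 := by
      intro l
      refine le_trans (Polynomial.natDegree_sub_le _ _) (max_le (by simp) ?_)
      refine le_trans (Polynomial.natDegree_mul_le) (by simp)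
    refine le_trans (Finset.sum_le_sum
      (f := fun l : Fin k =>
        ((1 : Polynomial ℝ) - Polynomial.C (lam (j l))⁻¹ * Polynomial.X).natDegree)
      (g := fun _ => 1) fun l _ => hone l) (by simp)
  -- sign constant and subset version of the weights
  set ck : ℕ := (((univ : Finset (Fin k)) ×ˢ univ).filter (fun p => p.1 < p.2)).card with hck
  have hD_eq : ∀ j ∈ S, D j = (-1 : ℝ) ^ ck * DF phat lam (Finset.image j univ) := by
    intro j hj
    rw [hS, Finset.mem_filter] at hj
    have hjinj : Function.Injective j := hj.2.injective
    have hpre : ∏ l : Fin k, phat (j l) ^ 2 * lam (j l) ^ 2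
        = ∏ a ∈ Finset.image j univ, phat a ^ 2 * lam a ^ 2 := by
      rw [Finset.prod_image (fun a _ b _ h => hjinj h)]
    have h1 := offDiag_prod_eq (fun l => lam (j l))
    have h2 := offDiag_prod_image lam j hjinj
    have hsq : ((-1 : ℝ) ^ ck) * ((-1 : ℝ) ^ ck) = 1 := by
      rw [← pow_add]
      exact Even.neg_one_pow ⟨ck, rfl⟩
    have hv : vand (fun l => lam (j l)) ^ 2 = (-1 : ℝ) ^ ck * Wd lam (Finset.image j univ) := by
      calc vand (fun l => lam (j l)) ^ 2
          = ((-1 : ℝ) ^ ck * (-1 : ℝ) ^ ck) * vand (fun l => lam (j l)) ^ 2 := by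
            rw [hsq, one_mul]
        _ = (-1 : ℝ) ^ ck * ((-1 : ℝ) ^ ck * vand (fun l => lam (j l)) ^ 2) := by ring
        _ = (-1 : ℝ) ^ ck * Wd lam (Finset.image j univ) := by
            rw [← hck] at h1
            rw [← h1, h2]
    rw [hDval, hv, hpre, DF]
    ring
  -- orthogonality of R against λ^m, 1 ≤ m ≤ k
  have hRorth : ∀ m, 1 ≤ m → m ≤ k →
      ∑ i', phat i' ^ 2 * R.eval (lam i') * lam i' ^ m = 0 := by
    intro m hm1 hmk
    have base := ortho phat lam hanti.injective hlam0 m hm1 hmk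
    have step_a : ∑ i', phat i' ^ 2 * R.eval (lam i') * lam i' ^ m
        = ∑ j ∈ S, w j *
            ∑ i', phat i' ^ 2 * lam i' ^ m * ∏ l : Fin k, (1 - lam i' / lam (j l)) := by
      have : ∀ i', phat i' ^ 2 * R.eval (lam i') * lam i' ^ m
          = ∑ j ∈ S, w j * (phat i' ^ 2 * lam i' ^ m
              * ∏ l : Fin k, (1 - lam i' / lam (j l))) := by
        intro i'
        rw [hReval, Finset.mul_sum, Finset.sum_mul]
        exact Finset.sum_congr rfl fun j _ => by ring
      rw [Finset.sum_congr rfl fun i' _ => this i', Finset.sum_comm]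
      refine Finset.sum_congr rfl fun j _ => ?_
      rw [Finset.mul_sum]
    have step_b : ∑ j ∈ S, w j *
          ∑ i', phat i' ^ 2 * lam i' ^ m * ∏ l : Fin k, (1 - lam i' / lam (j l))
        = (∑ j' ∈ S, D j')⁻¹ * ∑ j ∈ S, D j *
            ∑ i', phat i' ^ 2 * lam i' ^ m * ∏ l : Fin k, (1 - lam i' / lam (j l)) := by
      rw [Finset.mul_sum]
      refine Finset.sum_congr rfl fun j _ => ?_
      show D j / (∑ j' ∈ S, D j') * _ = _
      rw [div_eq_inv_mul]
      ring
    have hSsum : ∀ g : Finset (Fin n) → ℝ,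
        ∑ j ∈ S, g (Finset.image j univ)
          = ∑ A ∈ Finset.powersetCard k (univ : Finset (Fin n)), g A := by
      intro g
      exact sum_S_powerset g
    have step_c : ∑ j ∈ S, D j *
          ∑ i', phat i' ^ 2 * lam i' ^ m * ∏ l : Fin k, (1 - lam i' / lam (j l))
        = (-1 : ℝ) ^ ck * ∑ j ∈ S, DF phat lam (Finset.image j univ) *
            ∑ i', phat i' ^ 2 * lam i' ^ m
              * ∏ a ∈ Finset.image j univ, (1 - lam i' / lam a) := by
      rw [Finset.mul_sum]
      refine Finset.sum_congr rfl fun j hj => ?_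
      have hjS := hj
      rw [hS, Finset.mem_filter] at hjS
      have hjinj : Function.Injective j := hjS.2.injective
      have hprod : ∀ i', ∏ l : Fin k, (1 - lam i' / lam (j l))
          = ∏ a ∈ Finset.image j univ, (1 - lam i' / lam a) := by
        intro i'
        rw [Finset.prod_image (fun a _ b _ h => hjinj h)]
      rw [hD_eq j hj]
      rw [Finset.sum_congr rfl fun i' _ => by rw [hprod i']]
      ring
    have step_d : (∑ j ∈ S, DF phat lam (Finset.image j univ) *
          ∑ i', phat i' ^ 2 * lam i' ^ m
            * ∏ a ∈ Finset.image j univ, (1 - lam i' / lam a)) = 0 := by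
      have h := hSsum (fun A => DF phat lam A *
        ∑ i', phat i' ^ 2 * lam i' ^ m * ∏ a ∈ A, (1 - lam i' / lam a))
      refine h.trans ?_
      rw [← base]
      refine Finset.sum_congr rfl fun A _ => ?_
      rw [Finset.mul_sum]
    rw [step_a, step_b, step_c, step_d, mul_zero, mul_zero]
  -- optimality argument
  have hobj : ∀ Q : Polynomial ℝ,
      ∑ m', (((Polynomial.aeval (X * Xᵀ)) Q *ᵥ Y) m') ^ 2
        = ∑ i', phat i' ^ 2 * (Q.eval (lam i')) ^ 2 :=
    fun Q => obj_eq (X * Xᵀ) lam u Y hortho hspec Q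
  have hmin0 := hQmin k hk1 hkn R hRdeg hR0
  rw [hobj, hobj] at hmin0
  set dpoly : Polynomial ℝ := Qhat k - R with hdp
  have hd0 : dpoly.eval 0 = 0 := by
    rw [hdp, Polynomial.eval_sub, (hQmem k hk1 hkn).2, hR0, sub_self]
  have hddeg : dpoly.natDegree ≤ k :=
    le_trans (Polynomial.natDegree_sub_le _ _) (max_le (hQmem k hk1 hkn).1 hRdeg)
  have hdev : ∀ x, dpoly.eval x = (Qhat k).eval x - R.eval x := by
    intro x; rw [hdp, Polynomial.eval_sub]
  have hcross : ∑ i', phat i' ^ 2 * R.eval (lam i') * dpoly.eval (lam i') = 0 := by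
    have hexp : ∀ x : ℝ, dpoly.eval x
        = ∑ m' ∈ Finset.range (k + 1), dpoly.coeff m' * x ^ m' :=
      fun x => Polynomial.eval_eq_sum_range' (Nat.lt_succ_of_le hddeg) x
    have h1 : ∀ i', phat i' ^ 2 * R.eval (lam i') * dpoly.eval (lam i')
        = ∑ m' ∈ Finset.range (k + 1),
            dpoly.coeff m' * (phat i' ^ 2 * R.eval (lam i') * lam i' ^ m') := by
      intro i'
      rw [hexp, Finset.mul_sum]
      exact Finset.sum_congr rfl fun m' _ => by ring
    rw [Finset.sum_congr rfl fun i' _ => h1 i', Finset.sum_comm]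
    apply Finset.sum_eq_zero
    intro m' hm'
    rw [Finset.mem_range] at hm'
    rcases Nat.eq_zero_or_pos m' with h0 | h0
    · subst h0
      have : dpoly.coeff 0 = 0 := by
        rw [Polynomial.coeff_zero_eq_eval_zero, hd0]
      rw [← Finset.mul_sum, this, zero_mul]
    · rw [← Finset.mul_sum, hRorth m' h0 (by omega), mul_zero]
  have hsplit : ∑ i', phat i' ^ 2 * ((Qhat k).eval (lam i')) ^ 2
      = ∑ i', phat i' ^ 2 * (R.eval (lam i')) ^ 2
        + (2 * ∑ i', phat i' ^ 2 * R.eval (lam i') * dpoly.eval (lam i')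
          + ∑ i', phat i' ^ 2 * (dpoly.eval (lam i')) ^ 2) := by
    rw [Finset.mul_sum, ← Finset.sum_add_distrib, ← Finset.sum_add_distrib]
    refine Finset.sum_congr rfl fun i' _ => ?_
    rw [hdev]
    ring
  have hkey : ∑ i', phat i' ^ 2 * (dpoly.eval (lam i')) ^ 2 ≤ 0 := by
    rw [hcross] at hsplit
    linarith [hmin0, hsplit]
  have hzsum : ∑ i', phat i' ^ 2 * (dpoly.eval (lam i')) ^ 2 = 0 :=
    le_antisymm hkey (Finset.sum_nonneg fun i' _ => by positivity)
  have hzero : phat i ^ 2 * (dpoly.eval (lam i)) ^ 2 = 0 :=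
    (Finset.sum_eq_zero_iff_of_nonneg (fun i' _ => by positivity)).mp hzsum i
      (Finset.mem_univ i)
  have hQR : (Qhat k).eval (lam i) = R.eval (lam i) := by
    have hp2 : phat i ^ 2 ≠ 0 := pow_ne_zero _ (hphat i)
    have hdz : (dpoly.eval (lam i)) ^ 2 = 0 := by
      rcases mul_eq_zero.mp hzero with h' | h'
      · exact absurd h' hp2
      · exact h'
    have hdz' : dpoly.eval (lam i) = 0 := by
      have := sq_eq_zero_iff.mp hdz
      exact this
    have := hdev (lam i)
    rw [hdz'] at this
    linarith
  rw [hQR, hReval]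
end

section
/- For every 1 ≤ k < n and every 1 ≤ i ≤ n, the minimizing residual polynomial satisfies |Q̂_k(λ_i)| ≤ max_{(j_1,…,j_k)∈I_k^+} ∏_{l=1}^k |1 − λ_i/λ_{j_l}|. Consequently, if ε > 0 is such that |1 − λ_i/λ_j| ≤ ε for every 1 ≤ j ≤ n, then |Q̂_k(λ_i)| ≤ ε^k. -/
open Matrix Polynomial


lemma specA {n p : ℕ} (X : Matrix (Fin n) (Fin p) ℝ) (Y : Fin n → ℝ)
    (lam : Fin n → ℝ) (u : Fin n → Fin n → ℝ)
    (hortho : ∀ i j, u i ⬝ᵥ u j = if i = j then (1 : ℝ) else 0)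
    (hspec : X * Xᵀ = ∑ i, lam i • vecMulVec (u i) (u i))
    (Q : Polynomial ℝ) :
    ∑ i, (((Polynomial.aeval (X * Xᵀ)) Q *ᵥ Y) i) ^ 2
      = ∑ j, (u j ⬝ᵥ Y)^2 * (Q.eval (lam j))^2 := by
  classical
  set M := X * Xᵀ with hM
  have hu : ∀ j, M *ᵥ u j = lam j • u j := by
    intro j
    rw [hspec]
    ext i'
    simp only [mulVec, dotProduct, Finset.sum_apply, Matrix.sum_apply, Matrix.smul_apply,
      vecMulVec_apply, smul_eq_mul, Pi.smul_apply]
    simp only [Finset.sum_mul]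
    rw [Finset.sum_comm]
    have h1 : ∀ a, ∑ x, lam a * (u a i' * u a x) * u j x
        = lam a * u a i' * (u a ⬝ᵥ u j) := by
      intro a; rw [dotProduct, Finset.mul_sum]; exact Finset.sum_congr rfl fun x _ => by ring
    rw [Finset.sum_congr rfl fun a _ => h1 a,
      Finset.sum_congr rfl fun a _ => by rw [hortho]]
    simp [Finset.sum_ite_eq', mul_comm]
  have hpow : ∀ (m : ℕ) j, (M ^ m) *ᵥ u j = (lam j ^ m) • u j := by
    intro m j
    induction m with
    | zero => simp
    | succ m ih =>
      rw [pow_succ, ← mulVec_mulVec, hu, mulVec_smul, ih, smul_smul, ← pow_succ']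
  have hup : ∀ (Q : Polynomial ℝ) j, (aeval M Q) *ᵥ u j = (Q.eval (lam j)) • u j := by
    intro Q j
    induction Q using Polynomial.induction_on' with
    | add P R hP hR => rw [map_add, add_mulVec, hP, hR, eval_add, add_smul]
    | monomial m a =>
      rw [aeval_monomial, eval_monomial, Algebra.algebraMap_eq_smul_one, smul_mul_assoc, one_mul,
        smul_mulVec, hpow, smul_smul]
  have hUY : ∀ v : Fin n → ℝ, (∑ j, (u j ⬝ᵥ v) • u j) = v := by
    intro v
    set U : Matrix (Fin n) (Fin n) ℝ := Matrix.of u with hU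
    have h1 : U * Uᵀ = 1 := by
      ext a b
      simp only [Matrix.mul_apply, Matrix.transpose_apply, hU, Matrix.of_apply, Matrix.one_apply]
      simpa [dotProduct] using hortho a b
    have h2 : Uᵀ * U = 1 := mul_eq_one_comm.mp h1
    have h3 : Uᵀ *ᵥ (U *ᵥ v) = v := by rw [mulVec_mulVec, h2, one_mulVec]
    ext i'
    have h4 := congrFun h3 i'
    rw [← h4]
    simp only [mulVec, dotProduct, Finset.sum_apply, Pi.smul_apply, smul_eq_mul,
      Matrix.transpose_apply, hU, Matrix.of_apply]
    refine Finset.sum_congr rfl fun j _ => ?_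
    rw [Finset.sum_mul, Finset.mul_sum]
    exact Finset.sum_congr rfl fun i _ => by ring
  set c : Fin n → ℝ := fun j => (u j ⬝ᵥ Y) * Q.eval (lam j) with hc
  have hv : (aeval M Q) *ᵥ Y = ∑ j, c j • u j := by
    conv_lhs => rw [← hUY Y, ← Matrix.mulVecLin_apply]
    rw [map_sum]
    refine Finset.sum_congr rfl fun j _ => ?_
    rw [_root_.map_smul, Matrix.mulVecLin_apply, hup, smul_smul, hc]
  have hvi : ∀ i', ((aeval M Q) *ᵥ Y) i' = ∑ j, c j * u j i' := by
    intro i'; rw [hv]; simp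
  calc ∑ i', (((aeval M Q) *ᵥ Y) i') ^ 2
      = ∑ i', ∑ j, ∑ j', (c j * u j i') * (c j' * u j' i') := by
        refine Finset.sum_congr rfl fun i' _ => ?_
        rw [hvi, sq, Finset.sum_mul_sum]
    _ = ∑ j, ∑ j', (c j * c j') * (u j ⬝ᵥ u j') := by
        rw [Finset.sum_comm]
        refine Finset.sum_congr rfl fun j _ => ?_
        rw [Finset.sum_comm]
        refine Finset.sum_congr rfl fun j' _ => ?_
        rw [dotProduct, Finset.mul_sum]
        exact Finset.sum_congr rfl fun i' _ => by ring
    _ = ∑ j, (u j ⬝ᵥ Y)^2 * (Q.eval (lam j))^2 := by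
        refine Finset.sum_congr rfl fun j _ => ?_
        rw [Finset.sum_congr rfl fun j' _ => by rw [hortho]]
        simp [Finset.sum_ite_eq', hc]
        ring


lemma orthogB {n : ℕ} (k : ℕ) (w lam : Fin n → ℝ) (hw : ∀ j, 0 ≤ w j)
    (Qh : Polynomial ℝ)
    (hmin : ∀ Q : Polynomial ℝ, Q.natDegree ≤ k → Q.eval 0 = 1 →
      ∑ j, w j * (Qh.eval (lam j))^2 ≤ ∑ j, w j * (Q.eval (lam j))^2)
    (hQd : Qh.natDegree ≤ k) (hQ0 : Qh.eval 0 = 1) :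
    ∀ S : Polynomial ℝ, S.natDegree < k →
      ∑ j, w j * lam j * (Qh.eval (lam j)) * S.eval (lam j) = 0 := by
  intro S hS
  set A : Fin n → ℝ := fun j => Qh.eval (lam j) with hA
  set Bf : Fin n → ℝ := fun j => lam j * S.eval (lam j) with hBf
  set B : ℝ := ∑ j, w j * A j * Bf j with hB
  set Cc : ℝ := ∑ j, w j * (Bf j)^2 with hCc
  have hC0 : 0 ≤ Cc := Finset.sum_nonneg fun j _ => mul_nonneg (hw j) (sq_nonneg _)
  have key : ∀ t : ℝ, 0 ≤ 2*t*B + t^2*Cc := by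
    intro t
    have hdeg : (Qh + C t * (Polynomial.X * S)).natDegree ≤ k := by
      refine le_trans (natDegree_add_le _ _) (max_le hQd ?_)
      refine le_trans (natDegree_mul_le) ?_
      have h1 : (Polynomial.X * S : Polynomial ℝ).natDegree ≤ 1 + S.natDegree :=
        le_trans natDegree_mul_le (by simp [natDegree_X])
      simp only [natDegree_C]
      omega
    have h0 : (Qh + C t * (Polynomial.X * S)).eval 0 = 1 := by
      simp [hQ0]
    have hle := hmin _ hdeg h0
    have expand : ∑ j, w j * ((Qh + C t * (Polynomial.X * S)).eval (lam j))^2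
        = (∑ j, w j * (A j)^2) + (2*t*B + t^2*Cc) := by
      rw [hB, hCc, Finset.mul_sum, Finset.mul_sum, ← Finset.sum_add_distrib,
        ← Finset.sum_add_distrib]
      refine Finset.sum_congr rfl fun j _ => ?_
      simp only [eval_add, eval_mul, eval_C, eval_X, hA, hBf]
      ring
    rw [expand] at hle
    linarith
  have hBzero : B = 0 := by
    have h := key (-B/(Cc+1))
    have hd : (0:ℝ) < Cc + 1 := by linarith
    have heq : 2 * (-B/(Cc+1)) * B + (-B/(Cc+1))^2 * Cc = -(B^2 * (Cc+2))/(Cc+1)^2 := by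
      field_simp; ring
    rw [heq] at h
    have hd2 : (0:ℝ) < (Cc+1)^2 := by positivity
    have h5 : 0 ≤ -(B^2*(Cc+2)) := by
      calc (0:ℝ) ≤ (-(B^2*(Cc+2))/(Cc+1)^2) * (Cc+1)^2 := mul_nonneg h hd2.le
      _ = -(B^2*(Cc+2)) := div_mul_cancel₀ _ (ne_of_gt hd2)
    have h6 : B^2 = 0 := by nlinarith [sq_nonneg B]
    exact pow_eq_zero_iff two_ne_zero |>.mp h6
  rw [← hBzero, hB]
  exact Finset.sum_congr rfl fun j _ => by simp only [hA, hBf]; ring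


lemma signAux {x y z : ℝ} (h1 : 0 < x * y) (h2 : x * z < 0) : y * z < 0 := by
  rcases lt_trichotomy x 0 with hx|hx|hx
  · have hy : y < 0 := by nlinarith
    have hz : 0 < z := by nlinarith
    nlinarith
  · simp [hx] at h1
  · have hy : 0 < y := by nlinarith
    have hz : z < 0 := by nlinarith
    nlinarith

lemma altSeq {N : ℕ} (kk : ℕ) (hk1 : 1 ≤ kk) (w lam a : Fin N → ℝ)
    (hw : ∀ j, 0 < w j) (hanti : StrictAnti lam)
    (horth : ∀ S : Polynomial ℝ, S.natDegree < kk →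
      ∑ j, w j * a j * S.eval (lam j) = 0)
    (hnz : ∃ j, a j ≠ 0) :
    ∃ l : List (Fin N), l.Chain' (fun x y => y < x ∧ a x * a y < 0) ∧
      (∀ x ∈ l, a x ≠ 0) ∧ l.length = kk + 1 := by
  classical
  obtain ⟨j₁, hj₁⟩ := hnz
  set R : Fin N → Fin N → Prop := fun x y => y < x ∧ a x * a y < 0 with hR
  set Good : List (Fin N) → Prop := fun l => l.Chain' R ∧ ∀ x ∈ l, a x ≠ 0 with hGood
  have hlen : ∀ l, Good l → l.length ≤ N := by
    intro l hl
    have h2 : l.Chain' (fun x y : Fin N => x > y) := hl.1.imp fun x y h => h.1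
    have h3 : l.Pairwise (fun x y : Fin N => x > y) := List.isChain_iff_pairwise.mp h2
    have hnd : l.Nodup := h3.imp fun h => (ne_of_gt h)
    simpa using hnd.length_le_card
  set P : ℕ → Prop := fun L => ∃ l, Good l ∧ l.length = L with hP
  set m : ℕ := Nat.findGreatest P N with hm
  have hP0 : P 0 := ⟨[], ⟨List.isChain_nil, by simp⟩, rfl⟩
  have hm_spec : P m := Nat.findGreatest_spec (Nat.zero_le N) hP0
  have hmax : ∀ l, Good l → l.length ≤ m := by
    intro l hl
    by_contra hlt
    push_neg at hlt
    exact Nat.findGreatest_is_greatest hlt (hlen l hl) ⟨l, hl, rfl⟩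
  set Ph : Fin N → ℕ → Prop := fun j L => ∃ l, Good l ∧ l.head? = some j ∧ l.length = L
    with hPh
  set h : Fin N → ℕ := fun j => Nat.findGreatest (Ph j) N with hh
  have hNpos : 1 ≤ N := lt_of_le_of_lt (Nat.zero_le _) j₁.2
  have hsingle : ∀ j : Fin N, a j ≠ 0 → Ph j 1 := by
    intro j hj
    exact ⟨[j], ⟨List.isChain_singleton j, by simpa using hj⟩, rfl, rfl⟩
  have hh1 : ∀ j, a j ≠ 0 → 1 ≤ h j := fun j hj => Nat.le_findGreatest hNpos (hsingle j hj)
  have hhspec : ∀ j, a j ≠ 0 → Ph j (h j) := fun j hj =>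
    Nat.findGreatest_spec hNpos (hsingle j hj)
  have hhmax : ∀ j L, Ph j L → L ≤ h j := by
    rintro j L ⟨l, hl, hhead, rfl⟩
    exact Nat.le_findGreatest (hlen l hl) ⟨l, hl, hhead, rfl⟩
  have hhm : ∀ j, a j ≠ 0 → h j ≤ m := by
    intro j hj
    obtain ⟨l, hl, _, hlenl⟩ := hhspec j hj
    exact hlenl ▸ hmax l hl
  have hm1 : 1 ≤ m := hmax [j₁] ⟨List.isChain_singleton j₁, by simpa using hj₁⟩
  -- L1 : extension with opposite sign
  have L1 : ∀ j j' : Fin N, j < j' → a j ≠ 0 → a j' ≠ 0 → a j * a j' < 0 →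
      h j + 1 ≤ h j' := by
    intro j j' hlt hj hj' hsgn
    obtain ⟨l, hl, hhead, hlenl⟩ := hhspec j hj
    refine hhmax j' _ ⟨j' :: l, ⟨?_, ?_⟩, rfl, by simp [hlenl]⟩
    · refine List.isChain_cons.mpr ⟨?_, hl.1⟩
      intro y hy
      rw [hhead] at hy
      cases hy
      exact ⟨hlt, by rw [mul_comm] at hsgn; exact hsgn⟩
    · intro x hx
      rcases List.mem_cons.mp hx with rfl | hx
      · exact hj'
      · exact hl.2 x hx
  -- L2 : replacement with same sign
  have L2 : ∀ j j' : Fin N, j < j' → a j ≠ 0 → a j' ≠ 0 → 0 < a j * a j' →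
      h j ≤ h j' := by
    intro j j' hlt hj hj' hsgn
    obtain ⟨l, hl, hhead, hlenl⟩ := hhspec j hj
    cases l with
    | nil => simp at hhead
    | cons b t =>
      have hb : b = j := by simpa using hhead
      subst hb
      refine hhmax j' _ ⟨j' :: t, ⟨?_, ?_⟩, rfl, by simpa using hlenl⟩
      · rcases List.isChain_cons.mp hl.1 with ⟨hbt, ht⟩
        refine List.isChain_cons.mpr ⟨?_, ht⟩
        intro y hy
        obtain ⟨hylt, hys⟩ := hbt y hy
        exact ⟨lt_trans hylt hlt, signAux hsgn hys⟩
      · intro x hx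
        rcases List.mem_cons.mp hx with rfl | hx
        · exact hj'
        · exact hl.2 x (List.mem_cons_of_mem _ hx)
  -- L3 : predecessor in previous class
  have L3 : ∀ j' : Fin N, a j' ≠ 0 → 2 ≤ h j' →
      ∃ x : Fin N, a x ≠ 0 ∧ x < j' ∧ a x * a j' < 0 ∧ h x = h j' - 1 := by
    intro j' hj' h2
    obtain ⟨l, hl, hhead, hlenl⟩ := hhspec j' hj'
    cases l with
    | nil => simp at hhead
    | cons b t =>
      have hb : b = j' := by simpa using hhead
      subst hb
      cases t with
      | nil => simp at hlenl; omega
      | cons x r =>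
        obtain ⟨hRx, ht⟩ := List.isChain_cons_cons.mp hl.1
        have hx : a x ≠ 0 := hl.2 x (by simp)
        have hxb : a x * a b < 0 := by rw [mul_comm]; exact hRx.2
        have hgoodt : Good (x :: r) := ⟨ht, fun y hy => hl.2 y (List.mem_cons_of_mem _ hy)⟩
        have hlow : h b - 1 ≤ h x := by
          refine hhmax x _ ⟨x :: r, hgoodt, rfl, ?_⟩
          simp at hlenl ⊢; omega
        have hup : ¬ (h b ≤ h x) := by
          intro hcon
          have := L1 x b hRx.1 hx hj' hxb
          omega
        exact ⟨x, hx, hRx.1, hxb, by omega⟩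
  have hmono : ∀ j j' : Fin N, j < j' → a j ≠ 0 → a j' ≠ 0 → h j ≤ h j' := by
    intro j j' hlt hj hj'
    rcases lt_trichotomy (a j * a j') 0 with hs|hs|hs
    · have := L1 j j' hlt hj hj' hs; omega
    · exact absurd hs (mul_ne_zero hj hj')
    · exact L2 j j' hlt hj hj' hs
  have hclass : ∀ j j' : Fin N, j < j' → a j ≠ 0 → a j' ≠ 0 → h j = h j' →
      0 < a j * a j' := by
    intro j j' hlt hj hj' heq
    rcases lt_trichotomy (a j * a j') 0 with hs|hs|hs
    · have := L1 j j' hlt hj hj' hs; omega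
    · exact absurd hs (mul_ne_zero hj hj')
    · exact hs
  -- sign / parity correspondence
  have keyS : ∀ s : ℕ, ∀ j j' : Fin N, a j ≠ 0 → a j' ≠ 0 → h j ≤ h j' → h j' = s →
      0 < a j * a j' * (-1:ℝ)^(h j + h j') := by
    intro s
    induction s using Nat.strong_induction_on with
    | _ s ih =>
      intro j j' hj hj' hle hs
      rcases eq_or_lt_of_le hle with heq | hlt
      · have hpos : 0 < a j * a j' := by
          rcases lt_trichotomy j j' with h1|h1|h1
          · exact hclass j j' h1 hj hj' heq
          · subst h1; exact mul_self_pos.mpr hj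
          · rw [mul_comm]; exact hclass j' j h1 hj' hj heq.symm
        rw [← heq]
        have hev : (-1:ℝ)^(h j + h j) = 1 := by
          rw [← two_mul, pow_mul]; norm_num
        rw [hev, mul_one]; exact hpos
      · have h2 : 2 ≤ h j' := by have := hh1 j hj; omega
        obtain ⟨x, hx, hxlt, hxs, hxh⟩ := L3 j' hj' h2
        have hjx : h j ≤ h x := by omega
        have ihx := ih (h x) (by omega) j x hj hx hjx rfl
        have hx2 : 0 < a x * a x := mul_self_pos.mpr hx
        have hexp : h j' = h x + 1 := by omega
        have hkey : (a j * a j' * (-1:ℝ)^(h j + h j')) * (a x * a x)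
            = -((a j * a x * (-1:ℝ)^(h j + h x)) * (a x * a j')) := by
          rw [hexp, pow_add, pow_add, pow_one]; ring
        have hprod : 0 < (a j * a j' * (-1:ℝ)^(h j + h j')) * (a x * a x) := by
          rw [hkey]
          have := mul_neg_of_pos_of_neg ihx hxs
          linarith
        nlinarith [hprod, hx2]
  have keysign : ∀ j j' : Fin N, a j ≠ 0 → a j' ≠ 0 →
      0 < a j * a j' * (-1:ℝ)^(h j + h j') := by
    intro j j' hj hj'
    rcases le_total (h j) (h j') with hle|hle
    · exact keyS (h j') j j' hj hj' hle rfl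
    · have := keyS (h j) j' j hj' hj hle rfl
      rw [Nat.add_comm (h j') (h j)] at this
      nlinarith [this]
  -- it suffices to show kk + 1 ≤ m
  suffices hsuff : kk + 1 ≤ m by
    obtain ⟨l, hl, hlenl⟩ := hm_spec
    refine ⟨l.take (kk+1), hl.1.take _, ?_, ?_⟩
    · intro x hx
      exact hl.2 x (List.take_subset _ _ hx)
    · rw [List.length_take, hlenl]
      omega
  by_contra hmk
  push_neg at hmk
  have hmkk : m ≤ kk := by omega
  obtain ⟨lm, hlm, hlenm⟩ := hm_spec
  have hlmne : lm ≠ [] := by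
    intro hnil; rw [hnil] at hlenm; simp at hlenm; omega
  set jtop : Fin N := lm.head hlmne with hjt
  have hjtopnz : a jtop ≠ 0 := hlm.2 _ (List.head_mem hlmne)
  have htop : h jtop = m := by
    have h1 : m ≤ h jtop := hhmax jtop m ⟨lm, hlm, List.head?_eq_head hlmne, hlenm⟩
    have h2 := hhm jtop hjtopnz
    omega
  set J : ℕ → Finset (Fin N) := fun t => Finset.univ.filter (fun j => a j ≠ 0 ∧ t ≤ h j)
    with hJ
  have hJne : ∀ t, t ≤ m → (J t).Nonempty := by
    intro t ht
    exact ⟨jtop, by simp [hJ, hjtopnz, htop, ht]⟩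
  set μ : ℕ → Fin N := fun t => if htn : (J t).Nonempty then (J t).min' htn else j₁ with hμ
  have hμmem : ∀ t, t ≤ m → (a (μ t) ≠ 0 ∧ t ≤ h (μ t)) := by
    intro t ht
    have hmm := (J t).min'_mem (hJne t ht)
    simp only [hμ, dif_pos (hJne t ht)]
    simpa [hJ] using hmm
  have hμmin : ∀ t, t ≤ m → ∀ x : Fin N, a x ≠ 0 → t ≤ h x → μ t ≤ x := by
    intro t ht x hx htx
    simp only [hμ, dif_pos (hJne t ht)]
    exact Finset.min'_le _ _ (by simp [hJ, hx, htx])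
  set K : ℝ := a jtop * (-1:ℝ)^(m+1) with hK
  have hKnz : K ≠ 0 := mul_ne_zero hjtopnz (pow_ne_zero _ (by norm_num))
  set S : Polynomial ℝ := ∏ t ∈ Finset.Icc 2 m, (Polynomial.X - Polynomial.C (lam (μ t)))
    with hS
  have hSdeg : S.natDegree = m - 1 := by
    rw [hS, Polynomial.natDegree_prod _ _ (fun t _ => Polynomial.X_sub_C_ne_zero _)]
    simp only [Polynomial.natDegree_X_sub_C, Finset.sum_const, smul_eq_mul, mul_one,
      Nat.card_Icc]
    omega
  have hdeg' : (Polynomial.C K * S).natDegree < kk := by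
    have hle := Polynomial.natDegree_C_mul_le K S
    omega
  have hzero := horth (Polynomial.C K * S) hdeg'
  have heval : ∀ j, (Polynomial.C K * S).eval (lam j)
      = K * ∏ t ∈ Finset.Icc 2 m, (lam j - lam (μ t)) := by
    intro j; simp [hS, Polynomial.eval_prod]
  have hterm : ∀ j : Fin N, a j ≠ 0 →
      (0 ≤ w j * a j * ((Polynomial.C K * S).eval (lam j))) ∧
      ((∀ t ∈ Finset.Icc 2 m, μ t ≠ j) →
        0 < w j * a j * ((Polynomial.C K * S).eval (lam j))) := by
    intro j hj
    set s := h j with hsj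
    have hs1 : 1 ≤ s := hh1 j hj
    have hsm : s ≤ m := hhm j hj
    have hsplit : (∏ t ∈ Finset.Icc 2 m, (lam j - lam (μ t)))
        = (∏ t ∈ Finset.Icc 2 s, (lam j - lam (μ t)))
          * (∏ t ∈ (Finset.Icc 2 m).filter (fun t => ¬ t ≤ s), (lam j - lam (μ t))) := by
      rw [← Finset.prod_filter_mul_prod_filter_not (Finset.Icc 2 m) (fun t => t ≤ s)]
      congr 1
      apply Finset.prod_congr ?_ (fun _ _ => rfl)
      ext t; simp only [Finset.mem_Icc, Finset.mem_filter]; omega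
    have hA : ∀ t ∈ Finset.Icc 2 s, lam j - lam (μ t) = (-1) * (lam (μ t) - lam j) := by
      intros; ring
    have hP1 : (∏ t ∈ Finset.Icc 2 s, (lam j - lam (μ t)))
        = (-1:ℝ)^(s-1) * ∏ t ∈ Finset.Icc 2 s, (lam (μ t) - lam j) := by
      have hc : s + 1 - 2 = s - 1 := by omega
      rw [Finset.prod_congr rfl hA, Finset.prod_mul_distrib, Finset.prod_const, Nat.card_Icc,
        hc]
    have hAnn : ∀ t ∈ Finset.Icc 2 s, 0 ≤ lam (μ t) - lam j := by
      intro t htI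
      simp only [Finset.mem_Icc] at htI
      have hmu := hμmin t (le_trans htI.2 hsm) j hj (by omega)
      have := hanti.antitone hmu
      linarith
    have hApos0 : 0 ≤ ∏ t ∈ Finset.Icc 2 s, (lam (μ t) - lam j) := Finset.prod_nonneg hAnn
    have hP2pos : 0 < ∏ t ∈ (Finset.Icc 2 m).filter (fun t => ¬ t ≤ s),
        (lam j - lam (μ t)) := by
      apply Finset.prod_pos
      intro t htI
      simp only [Finset.mem_Icc, Finset.mem_filter] at htI
      have ht2 : 2 ≤ t := htI.1.1
      have htm : t ≤ m := htI.1.2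
      have hst : s < t := by omega
      have hμt := hμmem t htm
      have hjlt : j < μ t := by
        by_contra hle
        push_neg at hle
        rcases eq_or_lt_of_le hle with he|hlt2
        · rw [he] at hμt
          omega
        · have := hmono (μ t) j hlt2 hμt.1 hj
          omega
      have := hanti hjlt; linarith
    have hsign := keysign j jtop hj hjtopnz
    rw [htop] at hsign
    have hpow : (-1:ℝ)^(m+1) * (-1:ℝ)^(s-1) = (-1:ℝ)^(s+m) := by
      rw [← pow_add]; congr 1; omega
    have hexpr : w j * a j * ((Polynomial.C K * S).eval (lam j))
        = (w j * (a j * a jtop * (-1:ℝ)^(s+m)))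
          * ((∏ t ∈ Finset.Icc 2 s, (lam (μ t) - lam j))
            * (∏ t ∈ (Finset.Icc 2 m).filter (fun t => ¬ t ≤ s), (lam j - lam (μ t)))) := by
      rw [heval j, hsplit, hP1, hK, ← hpow]; ring
    have hpos1 : 0 < w j * (a j * a jtop * (-1:ℝ)^(s+m)) := mul_pos (hw j) hsign
    constructor
    · rw [hexpr]
      exact mul_nonneg hpos1.le (mul_nonneg hApos0 hP2pos.le)
    · intro hnomem
      have hApos : 0 < ∏ t ∈ Finset.Icc 2 s, (lam (μ t) - lam j) := by
        apply Finset.prod_pos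
        intro t htI
        simp only [Finset.mem_Icc] at htI
        have htm : t ≤ m := le_trans htI.2 hsm
        have hmu := hμmin t htm j hj (by omega)
        have hne : μ t ≠ j := hnomem t (by simp only [Finset.mem_Icc]; omega)
        have hlt2 : μ t < j := lt_of_le_of_ne hmu hne
        have := hanti hlt2; linarith
      rw [hexpr]
      exact mul_pos hpos1 (mul_pos hApos hP2pos)
  have hnodup : lm.Nodup := by
    have h2 : lm.Chain' (fun x y : Fin N => x > y) := hlm.1.imp fun x y h => h.1
    exact (List.isChain_iff_pairwise.mp h2).imp fun h => (ne_of_gt h)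
  have hcard : lm.toFinset.card = m := by
    rw [List.toFinset_card_of_nodup hnodup, hlenm]
  have hImcard : ((Finset.Icc 2 m).image μ).card ≤ m - 1 := by
    refine le_trans (Finset.card_image_le) ?_
    rw [Nat.card_Icc]; omega
  have hnsub : ¬ lm.toFinset ⊆ (Finset.Icc 2 m).image μ := by
    intro hsub
    have := Finset.card_le_card hsub
    omega
  obtain ⟨jstar, hjs1, hjs2⟩ := Finset.not_subset.mp hnsub
  have hjsnz : a jstar ≠ 0 := hlm.2 _ (List.mem_toFinset.mp hjs1)
  have hsum : 0 < ∑ j, w j * a j * ((Polynomial.C K * S).eval (lam j)) := by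
    apply Finset.sum_pos'
    · intro j _
      by_cases hj : a j = 0
      · simp [hj]
      · exact (hterm j hj).1
    · exact ⟨jstar, Finset.mem_univ _, (hterm jstar hjsnz).2
        (fun t ht hmu => hjs2 (hmu ▸ Finset.mem_image_of_mem μ ht))⟩
  rw [hzero] at hsum
  exact lt_irrefl 0 hsum


lemma fb1 {li x y : ℝ} (hli : 0 < li) (hx : 0 < x) (hxy : x ≤ y) (hlix : li ≤ x) :
    |1 - li/x| ≤ |1 - li/y| := by
  have hy : 0 < y := lt_of_lt_of_le hx hxy
  have h1 : li/y ≤ li/x := by rw [div_le_div_iff₀ hy hx]; nlinarith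
  have h2 : li/x ≤ 1 := (div_le_one hx).mpr hlix
  rw [abs_of_nonneg (by linarith), abs_of_nonneg (by linarith)]
  linarith

lemma fb2 {li x y : ℝ} (hli : 0 < li) (hy : 0 < y) (hyx : y ≤ x) (hxli : x ≤ li) :
    |1 - li/x| ≤ |1 - li/y| := by
  have hx : 0 < x := lt_of_lt_of_le hy hyx
  have h1 : li/x ≤ li/y := by rw [div_le_div_iff₀ hx hy]; nlinarith
  have h2 : (1:ℝ) ≤ li/x := (one_le_div hx).mpr hxli
  rw [abs_of_nonpos (by linarith), abs_of_nonpos (by linarith)]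
  linarith

lemma rootsSel {N : ℕ} (kk : ℕ) (lam : Fin N → ℝ) (hanti : StrictAnti lam)
    (hpos : ∀ j, 0 < lam j) (Qh : Polynomial ℝ) (hQd : Qh.natDegree ≤ kk)
    (hQ0 : Qh.eval 0 = 1) (l : List (Fin N))
    (hchain : l.Chain' (fun x y => y < x ∧ (Qh.eval (lam x)) * (Qh.eval (lam y)) < 0))
    (hlen : l.length = kk + 1) (i : Fin N) :
    ∃ j : Fin kk → Fin N, StrictAnti j ∧
      |Qh.eval (lam i)| ≤ ∏ l', |1 - lam i / lam (j l')| := by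
  classical
  set c : Fin (kk+1) → Fin N := fun s => l.get (Fin.cast hlen.symm s) with hc
  have hcanti : ∀ s s' : Fin (kk+1), s < s' → c s' < c s := by
    intro s s' hss
    have h2 : l.Chain' (fun x y : Fin N => x > y) := hchain.imp fun x y h => h.1
    have h3 := List.isChain_iff_pairwise.mp h2
    have h4 := List.pairwise_iff_get.mp h3
    exact h4 (Fin.cast hlen.symm s) (Fin.cast hlen.symm s') (by simpa using hss)
  have hadj : ∀ s : Fin kk, c s.succ < c s.castSucc ∧
      (Qh.eval (lam (c s.castSucc))) * (Qh.eval (lam (c s.succ))) < 0 := by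
    intro s
    have := List.isChain_iff_getElem.mp hchain s.1 (by omega)
    convert this using 3 <;> simp [hc, Fin.ext_iff]
  have hlamlt : ∀ s : Fin kk, lam (c s.castSucc) < lam (c s.succ) := fun s =>
    hanti (hadj s).1
  have hroot : ∀ s : Fin kk, ∃ θ, θ ∈ Set.Ioo (lam (c s.castSucc)) (lam (c s.succ)) ∧
      Qh.eval θ = 0 := by
    intro s
    set A := lam (c s.castSucc)
    set B := lam (c s.succ)
    have hAB : A ≤ B := (hlamlt s).le
    have hcont : ContinuousOn (fun x => Qh.eval x) (Set.Icc A B) :=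
      (Polynomial.continuous Qh).continuousOn
    rcases lt_trichotomy (Qh.eval A) 0 with hA|hA|hA
    · have hB : 0 < Qh.eval B := by nlinarith [(hadj s).2]
      have := intermediate_value_Ioo hAB hcont (Set.mem_Ioo.mpr ⟨hA, hB⟩)
      obtain ⟨θ, hθ1, hθ2⟩ := this
      exact ⟨θ, hθ1, hθ2⟩
    · exfalso; have := (hadj s).2; rw [hA] at this; simp at this
    · have hB : Qh.eval B < 0 := by nlinarith [(hadj s).2]
      have := intermediate_value_Ioo' hAB hcont (Set.mem_Ioo.mpr ⟨hB, hA⟩)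
      obtain ⟨θ, hθ1, hθ2⟩ := this
      exact ⟨θ, hθ1, hθ2⟩
  choose θ hθmem hθ0 using hroot
  have hθpos : ∀ s, 0 < θ s := fun s => lt_trans (hpos _) (hθmem s).1
  have hθmono : StrictMono θ := by
    intro s s' hss
    have h1 : θ s < lam (c s.succ) := (hθmem s).2
    have h2 : lam (c s'.castSucc) < θ s' := (hθmem s').1
    have h3 : lam (c s.succ) ≤ lam (c s'.castSucc) := by
      have hle : s.succ ≤ s'.castSucc := by
        rw [Fin.le_def]
        simp only [Fin.val_succ, Fin.coe_castSucc]
        have := (Fin.lt_def).mp hss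
        omega
      rcases eq_or_lt_of_le hle with he|hlt
      · rw [he]
      · exact (hanti (hcanti _ _ hlt)).le
    linarith
  -- factorization
  set Rp : Polynomial ℝ := ∏ s : Fin kk, (1 - Polynomial.C (θ s)⁻¹ * Polynomial.X) with hRp
  have hfac : Qh = Rp := by
    have hRdeg : Rp.natDegree ≤ kk := by
      refine le_trans (Polynomial.natDegree_prod_le Finset.univ
        (fun s => 1 - Polynomial.C (θ s)⁻¹ * Polynomial.X)) ?_
      have : ∀ s : Fin kk, ((1 : Polynomial ℝ) - Polynomial.C (θ s)⁻¹ * Polynomial.X).natDegree ≤ 1 := by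
        intro s
        refine le_trans (Polynomial.natDegree_sub_le _ _) (max_le (by simp) ?_)
        exact le_trans (Polynomial.natDegree_C_mul_le _ _) (by simp)
      refine le_trans (Finset.sum_le_sum (fun s (_ : s ∈ Finset.univ) => this s)) ?_
      simp
    set D : Polynomial ℝ := Qh - Rp with hD
    have hDdeg : D.natDegree ≤ kk := le_trans (Polynomial.natDegree_sub_le _ _)
      (max_le hQd hRdeg)
    have hDzero : D = 0 := by
      set f : Option (Fin kk) → ℝ := fun o => Option.elim o 0 θ with hf
      have hinj : Function.Injective f := by
        intro o o' ho
        match o, o' with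
        | none, none => rfl
        | none, some s => exact absurd ho.symm (ne_of_gt (hθpos s))
        | some s, none => exact absurd ho (ne_of_gt (hθpos s))
        | some s, some s' => exact congrArg _ (hθmono.injective ho)
      refine Polynomial.eq_zero_of_natDegree_lt_card_of_eval_eq_zero D hinj ?_ ?_
      · intro o
        match o with
        | none =>
          simp only [hf, Option.elim, hD, Polynomial.eval_sub, hQ0]
          have : Rp.eval 0 = 1 := by simp [hRp, Polynomial.eval_prod]
          rw [this]; ring
        | some s =>
          simp only [hf, Option.elim, hD, Polynomial.eval_sub, hθ0]
          have : Rp.eval (θ s) = 0 := by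
            rw [hRp, Polynomial.eval_prod]
            refine Finset.prod_eq_zero (Finset.mem_univ s) ?_
            simp [inv_mul_cancel₀ (ne_of_gt (hθpos s))]
          rw [this]; ring
      · simpa using Nat.lt_succ_of_le hDdeg
    have := sub_eq_zero.mp hDzero
    exact this
  have habs : |Qh.eval (lam i)| = ∏ s : Fin kk, |1 - lam i / θ s| := by
    rw [hfac, hRp, Polynomial.eval_prod, Finset.abs_prod]
    refine Finset.prod_congr rfl fun s _ => ?_
    simp only [Polynomial.eval_sub, Polynomial.eval_one, Polynomial.eval_mul, Polynomial.eval_C,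
      Polynomial.eval_X]
    congr 1
    ring
  -- selection
  set j : Fin kk → Fin N := fun s => if lam i < θ s then c s.succ else c s.castSucc with hj
  have hjdef : ∀ s, j s = if lam i < θ s then c s.succ else c s.castSucc := fun s => rfl
  have hv : ∀ (x y : Fin (kk+1)), x.1 < y.1 → c y < c x := fun x y hxy =>
    hcanti x y ((Fin.lt_def).mpr hxy)
  have hjanti : StrictAnti j := by
    intro s s' hss
    have hss' : s.1 < s'.1 := (Fin.lt_def).mp hss
    by_cases h1 : lam i < θ s <;> by_cases h2 : lam i < θ s'
    · rw [hjdef s, hjdef s', if_pos h1, if_pos h2]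
      exact hv _ _ (by simp only [Fin.val_succ]; omega)
    · exact absurd (lt_trans h1 (hθmono hss)) h2
    · rw [hjdef s, hjdef s', if_neg h1, if_pos h2]
      exact hv _ _ (by simp only [Fin.val_succ, Fin.coe_castSucc]; omega)
    · rw [hjdef s, hjdef s', if_neg h1, if_neg h2]
      exact hv _ _ (by simp only [Fin.coe_castSucc]; omega)
  refine ⟨j, hjanti, ?_⟩
  rw [habs]
  refine Finset.prod_le_prod (fun s _ => abs_nonneg _) (fun s _ => ?_)
  by_cases hcase : lam i < θ s
  · rw [hjdef s, if_pos hcase]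
    exact fb1 (hpos i) (hθpos s) (hθmem s).2.le hcase.le
  · push_neg at hcase
    rw [hjdef s, if_neg (not_lt.mpr hcase)]
    exact fb2 (hpos i) (hpos _) (hθmem s).1.le hcase


/-- |Q̂_k(λ_i)| ≤ max_{(j_1,…,j_k)∈I_k^+} ∏_l |1 − λ_i/λ_{j_l}|
(the max over strictly decreasing k-tuples, expressed as the supremum of the
corresponding finite set of values); consequently, if |1 − λ_i/λ_j| ≤ ε for all j
with ε > 0, then |Q̂_k(λ_i)| ≤ ε^k. -/
theorem stmt10 {n p : ℕ} (X : Matrix (Fin n) (Fin p) ℝ) (Y : Fin n → ℝ)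
    (lam : Fin n → ℝ) (u : Fin n → Fin n → ℝ)
    (hortho : ∀ i j, u i ⬝ᵥ u j = if i = j then (1 : ℝ) else 0)
    (hspec : X * Xᵀ = ∑ i, lam i • vecMulVec (u i) (u i))
    (hanti : StrictAnti lam) (hpos : ∀ i, 0 < lam i)
    (hphat : ∀ i, u i ⬝ᵥ Y ≠ 0)
    (Qhat : ℕ → Polynomial ℝ)
    (hQmem : ∀ k, 1 ≤ k → k < n → (Qhat k).natDegree ≤ k ∧ (Qhat k).eval 0 = 1)
    (hQmin : ∀ k, 1 ≤ k → k < n → ∀ Q : Polynomial ℝ, Q.natDegree ≤ k → Q.eval 0 = 1 →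
      ∑ i, (((Polynomial.aeval (X * Xᵀ)) (Qhat k) *ᵥ Y) i) ^ 2 ≤
        ∑ i, (((Polynomial.aeval (X * Xᵀ)) Q *ᵥ Y) i) ^ 2)
    (k : ℕ) (hk1 : 1 ≤ k) (hkn : k < n) (i : Fin n) :
    |(Qhat k).eval (lam i)| ≤
        sSup {r : ℝ | ∃ j : Fin k → Fin n, StrictAnti j ∧
          r = ∏ l, |1 - lam i / lam (j l)|} ∧
      ∀ ε : ℝ, 0 < ε → (∀ j, |1 - lam i / lam j| ≤ ε) →
        |(Qhat k).eval (lam i)| ≤ ε ^ k := by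
  classical
  obtain ⟨hQd, hQ0⟩ := hQmem k hk1 hkn
  have hspecA := specA X Y lam u hortho hspec
  have hmin' : ∀ Q : Polynomial ℝ, Q.natDegree ≤ k → Q.eval 0 = 1 →
      ∑ j, (u j ⬝ᵥ Y)^2 * ((Qhat k).eval (lam j))^2
        ≤ ∑ j, (u j ⬝ᵥ Y)^2 * (Q.eval (lam j))^2 := by
    intro Q hQ hQ0'
    rw [← hspecA, ← hspecA]
    exact hQmin k hk1 hkn Q hQ hQ0'
  have horthg := orthogB k (fun j => (u j ⬝ᵥ Y)^2) lam (fun j => sq_nonneg _)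
    (Qhat k) hmin' hQd hQ0
  set W : Fin n → ℝ := fun j => (u j ⬝ᵥ Y)^2 * lam j with hW
  set a : Fin n → ℝ := fun j => (Qhat k).eval (lam j) with ha
  have hWpos : ∀ j, 0 < W j := by
    intro j
    have h1 : 0 < (u j ⬝ᵥ Y)^2 :=
      lt_of_le_of_ne (sq_nonneg _) (Ne.symm (pow_ne_zero 2 (hphat j)))
    exact mul_pos h1 (hpos j)
  have horthW : ∀ S : Polynomial ℝ, S.natDegree < k →
      ∑ j, W j * a j * S.eval (lam j) = 0 := by
    intro S hS
    rw [← horthg S hS]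
  have hnz : ∃ j, a j ≠ 0 := by
    by_contra hcon
    push_neg at hcon
    have hz : Qhat k = 0 := by
      refine Polynomial.eq_zero_of_natDegree_lt_card_of_eval_eq_zero (Qhat k)
        hanti.injective (fun j => hcon j) ?_
      simpa using lt_of_le_of_lt hQd hkn
    rw [hz] at hQ0
    simp at hQ0
  obtain ⟨l, hchain, hnzl, hlenl⟩ := altSeq k hk1 W lam a hWpos hanti horthW hnz
  obtain ⟨j, hjanti, hbound⟩ := rootsSel k lam hanti hpos (Qhat k) hQd hQ0 l hchain hlenl i
  constructor
  · have hmem : (∏ l', |1 - lam i / lam (j l')|) ∈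
        {r : ℝ | ∃ j : Fin k → Fin n, StrictAnti j ∧ r = ∏ l, |1 - lam i / lam (j l)|} :=
      ⟨j, hjanti, rfl⟩
    have hbdd : BddAbove {r : ℝ | ∃ j : Fin k → Fin n, StrictAnti j ∧
        r = ∏ l, |1 - lam i / lam (j l)|} := by
      have hsub : {r : ℝ | ∃ j : Fin k → Fin n, StrictAnti j ∧
          r = ∏ l, |1 - lam i / lam (j l)|}
          ⊆ (fun (j : Fin k → Fin n) => ∏ l', |1 - lam i / lam (j l')|) '' Set.univ := by
        rintro r ⟨j', _, rfl⟩
        exact ⟨j', trivial, rfl⟩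
      exact Set.Finite.bddAbove (Set.Finite.subset (Set.Finite.image _ Set.finite_univ) hsub)
    exact le_trans hbound (le_csSup hbdd hmem)
  · intro ε hε hεj
    refine le_trans hbound (le_trans (Finset.prod_le_prod
      (fun _ _ => abs_nonneg _) (fun l' _ => hεj (j l'))) ?_)
    simp [Finset.prod_const]
end
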